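/- arXiv:1204.4873 — 7 statements merged into one kernel-verified Lean document; each statement's English description precedes it below -/
import Mathlib

section
/- Let T_H and T_A be finite abelian groups and let n ≥ r ≥ 0 be integers. Set H = ℤⁿ × T_H and A = ℤʳ × T_A. Let P ≤ GL_n(ℤ) be the subgroup of all invertible integer matrices of block form (Q₁ Q₂; 0 Q₃), where Q₁ has size (n−r)×(n−r) and Q₃ has size r×r. Let Γ = Epi(ℤ^{n−r} × T_H, T_A)/Aut(T_A), and let P act on Γ on the left by Q·[γ] = [γ ∘ (Q₁⁻¹ ⊕ id_{T_H})], where Q₁⁻¹ acts on the factor ℤ^{n−r}. Then there is a bijection between Γ(H, A) = Epi(H, A)/Aut(A) and the twisted product GL_n(ℤ) ×_P Γ, i.e., the quotient of the set GL_n(ℤ) × Γ by the equivalence relation generated by (M·Q, [γ]) ∼ (M, Q·[γ]) for all M ∈ GL_n(ℤ), Q ∈ P, [γ] ∈ Γ. -/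
/-- The set of surjective homomorphisms between two additive groups. -/
def EpiSet (G A : Type*) [AddGroup G] [AddGroup A] : Type _ :=
  {f : G →+ A // Function.Surjective f}

/-- Two epimorphisms are equivalent if they differ by an automorphism of the target. -/
def GammaRel (G A : Type*) [AddGroup G] [AddGroup A] (ν₁ ν₂ : EpiSet G A) : Prop :=
  ∃ α : A ≃+ A, ∀ g : G, α (ν₁.1 g) = ν₂.1 g

/-- The parameter set `Γ(G,A) = Epi(G,A)/Aut(A)`. -/
def GammaSet (G A : Type*) [AddGroup G] [AddGroup A] : Type _ :=
  Quot (GammaRel G A)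

/-- Membership in the parabolic subgroup `P ≤ GL_n(ℤ)`: the lower left `r × (n-r)`
block vanishes. -/
def InPar (n r : ℕ) (Q : Matrix.GeneralLinearGroup (Fin n) ℤ) : Prop :=
  ∀ i j : Fin n, n - r ≤ (i : ℕ) → (j : ℕ) < n - r →
    (Q : Matrix (Fin n) (Fin n) ℤ) i j = 0

/-- The inverse `Q₁⁻¹` of the upper-left `(n-r) × (n-r)` block of `Q`. -/
noncomputable def blockInv (n r : ℕ) (Q : Matrix.GeneralLinearGroup (Fin n) ℤ) :
    Matrix (Fin (n - r)) (Fin (n - r)) ℤ :=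
  (Matrix.of fun i j => (Q : Matrix (Fin n) (Fin n) ℤ)
    (Fin.castLE (Nat.sub_le n r) i) (Fin.castLE (Nat.sub_le n r) j))⁻¹

/-- The endomorphism `Q₁⁻¹ ⊕ id` of `ℤ^{n-r} × T_H`. -/
noncomputable def actHom (n r : ℕ) (T_H : Type*) [AddCommGroup T_H]
    (Q : Matrix.GeneralLinearGroup (Fin n) ℤ) :
    (Fin (n - r) → ℤ) × T_H →+ (Fin (n - r) → ℤ) × T_H :=
  AddMonoidHom.prodMap ((blockInv n r Q).mulVecLin.toAddMonoidHom)
    (AddMonoidHom.id T_H)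

/-- The relation generating the twisted product `GL_n(ℤ) ×_P Γ`:
`(M·Q, [γ]) ∼ (M, Q·[γ])` with `Q·[γ] = [γ ∘ (Q₁⁻¹ ⊕ id)]` for `Q ∈ P`. -/
def TwistRel (n r : ℕ) (T_H T_A : Type*) [AddCommGroup T_H] [AddCommGroup T_A]
    (p q : Matrix.GeneralLinearGroup (Fin n) ℤ ×
      GammaSet ((Fin (n - r) → ℤ) × T_H) T_A) : Prop :=
  ∃ (M Q : Matrix.GeneralLinearGroup (Fin n) ℤ)
    (γ δ : EpiSet ((Fin (n - r) → ℤ) × T_H) T_A),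
      InPar n r Q ∧ p.1 = M * Q ∧ p.2 = Quot.mk _ γ ∧
      q.1 = M ∧ q.2 = Quot.mk _ δ ∧ δ.1 = γ.1.comp (actHom n r T_H Q)


open Matrix

section Aux

/-- Homs from finite groups to `ℤ^k` vanish. -/
theorem fin_hom_eq_zero {T : Type*} [AddGroup T] [Finite T] {k : ℕ}
    (f : T →+ (Fin k → ℤ)) (t : T) : f t = 0 := by
  have h1 : IsOfFinAddOrder t := isOfFinAddOrder_of_finite t
  have h2 : addOrderOf t • f t = 0 := by
    rw [← map_nsmul, addOrderOf_nsmul_eq_zero, map_zero]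
  have h3 : 0 < addOrderOf t := h1.addOrderOf_pos
  funext i
  have h4 := congrFun h2 i
  simp only [Pi.smul_apply, smul_eq_mul, Pi.zero_apply, nsmul_eq_mul] at h4 ⊢
  have h5 : ((addOrderOf t : ℤ)) * f t i = 0 := by exact_mod_cast h4
  rcases mul_eq_zero.mp h5 with h | h
  · omega
  · exact h

variable (n r : ℕ) (hr : r ≤ n)

def gE : Fin (n - r) ⊕ Fin r ≃ Fin n :=
  finSumFinEquiv.trans (finCongr (Nat.sub_add_cancel hr))

noncomputable def resl : (Fin n → ℤ) →ₗ[ℤ] (Fin (n - r) → ℤ) :=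
  LinearMap.funLeft ℤ ℤ (fun i => gE n r hr (Sum.inl i))

noncomputable def projl : (Fin n → ℤ) →ₗ[ℤ] (Fin r → ℤ) :=
  LinearMap.funLeft ℤ ℤ (fun j => gE n r hr (Sum.inr j))

def elimL : (Fin (n - r) → ℤ) →ₗ[ℤ] (Fin (n - r) ⊕ Fin r → ℤ) where
  toFun z := Sum.elim z 0
  map_add' x y := by funext k; cases k <;> simp
  map_smul' c x := by funext k; cases k <;> simp

def elimR : (Fin r → ℤ) →ₗ[ℤ] (Fin (n - r) ⊕ Fin r → ℤ) where
  toFun a := Sum.elim 0 a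
  map_add' x y := by funext k; cases k <;> simp
  map_smul' c x := by funext k; cases k <;> simp

noncomputable def embL : (Fin (n - r) → ℤ) →ₗ[ℤ] (Fin n → ℤ) :=
  (LinearMap.funLeft ℤ ℤ (gE n r hr).symm).comp (elimL n r)

noncomputable def embR : (Fin r → ℤ) →ₗ[ℤ] (Fin n → ℤ) :=
  (LinearMap.funLeft ℤ ℤ (gE n r hr).symm).comp (elimR n r)

lemma comp_gE (x : Fin n → ℤ) :
    x ∘ (gE n r hr) = Sum.elim (resl n r hr x) (projl n r hr x) := by
  funext k; cases k <;> rfl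

lemma resl_embL (z : Fin (n - r) → ℤ) : resl n r hr (embL n r hr z) = z := by
  funext i; simp [resl, embL, elimL, LinearMap.funLeft]

lemma projl_embL (z : Fin (n - r) → ℤ) : projl n r hr (embL n r hr z) = 0 := by
  funext i; simp [projl, embL, elimL, LinearMap.funLeft]

lemma resl_embR (a : Fin r → ℤ) : resl n r hr (embR n r hr a) = 0 := by
  funext i; simp [resl, embR, elimR, LinearMap.funLeft]

lemma projl_embR (a : Fin r → ℤ) : projl n r hr (embR n r hr a) = a := by
  funext i; simp [projl, embR, elimR, LinearMap.funLeft]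

lemma decomp (x : Fin n → ℤ) :
    embL n r hr (resl n r hr x) + embR n r hr (projl n r hr x) = x := by
  funext i
  have h : x i = (Sum.elim (resl n r hr x) (projl n r hr x)) ((gE n r hr).symm i) := by
    rw [← comp_gE]; simp
  rw [h]
  simp only [embL, embR, elimL, elimR, LinearMap.comp_apply, LinearMap.funLeft_apply,
    LinearMap.coe_mk, AddHom.coe_mk, Pi.add_apply]
  cases (gE n r hr).symm i <;> simp

def blkA (Q : Matrix (Fin n) (Fin n) ℤ) : Matrix (Fin (n-r)) (Fin (n-r)) ℤ :=
  (Q.submatrix (gE n r hr) (gE n r hr)).toBlocks₁₁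
def blkB (Q : Matrix (Fin n) (Fin n) ℤ) : Matrix (Fin (n-r)) (Fin r) ℤ :=
  (Q.submatrix (gE n r hr) (gE n r hr)).toBlocks₁₂
def blkC (Q : Matrix (Fin n) (Fin n) ℤ) : Matrix (Fin r) (Fin (n-r)) ℤ :=
  (Q.submatrix (gE n r hr) (gE n r hr)).toBlocks₂₁
def blkD (Q : Matrix (Fin n) (Fin n) ℤ) : Matrix (Fin r) (Fin r) ℤ :=
  (Q.submatrix (gE n r hr) (gE n r hr)).toBlocks₂₂

lemma gE_inl_val (i : Fin (n - r)) : ((gE n r hr (Sum.inl i) : Fin n) : ℕ) = (i : ℕ) := by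
  simp [gE]
lemma gE_inr_val (j : Fin r) : ((gE n r hr (Sum.inr j) : Fin n) : ℕ) = (n - r) + (j : ℕ) := by
  simp [gE]

lemma submatrix_eq_fromBlocks (Q : Matrix (Fin n) (Fin n) ℤ) :
    Q.submatrix (gE n r hr) (gE n r hr)
      = fromBlocks (blkA n r hr Q) (blkB n r hr Q) (blkC n r hr Q) (blkD n r hr Q) :=
  (fromBlocks_toBlocks _).symm

lemma blockInv_eq (Q : Matrix.GeneralLinearGroup (Fin n) ℤ) :
    blockInv n r Q = (blkA n r hr (Q : Matrix (Fin n) (Fin n) ℤ))⁻¹ := rfl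

lemma blkC_eq_zero (Q : Matrix.GeneralLinearGroup (Fin n) ℤ) (hQ : InPar n r Q) :
    blkC n r hr (Q : Matrix (Fin n) (Fin n) ℤ) = 0 := by
  ext i j
  exact hQ _ _ (by simp [gE_inr_val]) (by simpa using (gE_inl_val n r hr j ▸ (j.isLt : (j:ℕ) < n - r)))

lemma inPar_of_blkC (Q : Matrix.GeneralLinearGroup (Fin n) ℤ)
    (h : blkC n r hr (Q : Matrix (Fin n) (Fin n) ℤ) = 0) : InPar n r Q := by
  intro i j hi hj
  have hi' : (i : ℕ) - (n - r) < r := by omega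
  have hij : i = gE n r hr (Sum.inr ⟨(i : ℕ) - (n - r), hi'⟩) := by
    refine Fin.ext ?_
    rw [gE_inr_val]; simp; omega
  have hjj : j = gE n r hr (Sum.inl ⟨(j : ℕ), hj⟩) := by
    refine Fin.ext ?_
    rw [gE_inl_val]
  have h2 := congrFun (congrFun h ⟨(i : ℕ) - (n - r), hi'⟩) ⟨(j : ℕ), hj⟩
  simp only [blkC, toBlocks₂₁, of_apply, submatrix_apply, Matrix.zero_apply] at h2
  rw [hij, hjj]
  exact h2

lemma mulVec_comp_gE (Q : Matrix (Fin n) (Fin n) ℤ) (x : Fin n → ℤ) :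
    (Q.mulVec x) ∘ (gE n r hr)
      = (Q.submatrix (gE n r hr) (gE n r hr)).mulVec (x ∘ (gE n r hr)) := by
  rw [Matrix.submatrix_mulVec_equiv]
  have h : (x ∘ ⇑(gE n r hr)) ∘ ⇑(gE n r hr).symm = x := by funext i; simp
  rw [h]

lemma blocks_mulVec (Q : Matrix (Fin n) (Fin n) ℤ) (x : Fin n → ℤ) :
    (Q.mulVec x) ∘ (gE n r hr)
      = Sum.elim
          ((blkA n r hr Q).mulVec (resl n r hr x) + (blkB n r hr Q).mulVec (projl n r hr x))
          ((blkC n r hr Q).mulVec (resl n r hr x) + (blkD n r hr Q).mulVec (projl n r hr x)) := by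
  rw [mulVec_comp_gE, submatrix_eq_fromBlocks, comp_gE, fromBlocks_mulVec]
  simp

lemma res_mulVec (Q : Matrix (Fin n) (Fin n) ℤ) (x : Fin n → ℤ) :
    resl n r hr (Q.mulVec x)
      = (blkA n r hr Q).mulVec (resl n r hr x) + (blkB n r hr Q).mulVec (projl n r hr x) :=
  funext fun i => congrFun (blocks_mulVec n r hr Q x) (Sum.inl i)

lemma proj_mulVec (Q : Matrix (Fin n) (Fin n) ℤ) (x : Fin n → ℤ) :
    projl n r hr (Q.mulVec x)
      = (blkC n r hr Q).mulVec (resl n r hr x) + (blkD n r hr Q).mulVec (projl n r hr x) :=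
  funext fun j => congrFun (blocks_mulVec n r hr Q x) (Sum.inr j)

lemma isUnit_det_blk (Q : Matrix.GeneralLinearGroup (Fin n) ℤ) (hQ : InPar n r Q) :
    IsUnit (blkA n r hr (Q : Matrix (Fin n) (Fin n) ℤ)).det ∧
    IsUnit (blkD n r hr (Q : Matrix (Fin n) (Fin n) ℤ)).det := by
  have h0 : IsUnit ((Q : Matrix (Fin n) (Fin n) ℤ)).det :=
    (Matrix.isUnit_iff_isUnit_det _).mp ⟨Q, rfl⟩
  have h1 : ((Q : Matrix (Fin n) (Fin n) ℤ).submatrix (gE n r hr) (gE n r hr)).det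
      = (Q : Matrix (Fin n) (Fin n) ℤ).det := det_submatrix_equiv_self _ _
  rw [submatrix_eq_fromBlocks, blkC_eq_zero n r hr Q hQ, det_fromBlocks_zero₂₁] at h1
  rw [← h1] at h0
  exact ⟨isUnit_of_mul_isUnit_left h0, isUnit_of_mul_isUnit_right h0⟩

lemma inv_blocks (Q : Matrix.GeneralLinearGroup (Fin n) ℤ) (hQ : InPar n r Q) :
    InPar n r Q⁻¹ ∧
    blkA n r hr ((Q⁻¹ : Matrix.GeneralLinearGroup (Fin n) ℤ) : Matrix (Fin n) (Fin n) ℤ)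
      = (blkA n r hr (Q : Matrix (Fin n) (Fin n) ℤ))⁻¹ ∧
    blkD n r hr ((Q⁻¹ : Matrix.GeneralLinearGroup (Fin n) ℤ) : Matrix (Fin n) (Fin n) ℤ)
      = (blkD n r hr (Q : Matrix (Fin n) (Fin n) ℤ))⁻¹ := by
  obtain ⟨hA, hD⟩ := isUnit_det_blk n r hr Q hQ
  set A := blkA n r hr (Q : Matrix (Fin n) (Fin n) ℤ) with hAdef
  set B := blkB n r hr (Q : Matrix (Fin n) (Fin n) ℤ) with hBdef
  set D := blkD n r hr (Q : Matrix (Fin n) (Fin n) ℤ) with hDdef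
  set R : Matrix (Fin (n-r) ⊕ Fin r) (Fin (n-r) ⊕ Fin r) ℤ :=
    fromBlocks A⁻¹ (-(A⁻¹ * B * D⁻¹)) 0 D⁻¹ with hRdef
  have key : (Q : Matrix (Fin n) (Fin n) ℤ)
      * (R.submatrix (gE n r hr).symm (gE n r hr).symm) = 1 := by
    have h2 : (Q : Matrix (Fin n) (Fin n) ℤ)
        = ((Q : Matrix (Fin n) (Fin n) ℤ).submatrix (gE n r hr) (gE n r hr)).submatrix
            (gE n r hr).symm (gE n r hr).symm := by
      ext i j; simp
    rw [h2, Matrix.submatrix_mul_equiv]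
    rw [submatrix_eq_fromBlocks, blkC_eq_zero n r hr Q hQ, hRdef, fromBlocks_multiply]
    rw [Matrix.mul_nonsing_inv _ hA, Matrix.mul_nonsing_inv _ hD]
    have hmid : A * -(A⁻¹ * B * D⁻¹) + B * D⁻¹ = 0 := by
      rw [Matrix.mul_neg, ← Matrix.mul_assoc, ← Matrix.mul_assoc, Matrix.mul_nonsing_inv _ hA,
        Matrix.one_mul]
      exact neg_add_cancel _
    rw [hmid]
    simp only [Matrix.zero_mul, Matrix.mul_zero, add_zero, zero_add, Matrix.zero_mul]
    rw [fromBlocks_one]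
    exact submatrix_one_equiv _
  have hcoe : ((Q⁻¹ : Matrix.GeneralLinearGroup (Fin n) ℤ) : Matrix (Fin n) (Fin n) ℤ)
      = R.submatrix (gE n r hr).symm (gE n r hr).symm := by
    rw [Matrix.coe_units_inv]
    exact Matrix.inv_eq_right_inv key
  have hsub : ((Q⁻¹ : Matrix.GeneralLinearGroup (Fin n) ℤ) : Matrix (Fin n) (Fin n) ℤ).submatrix
      (gE n r hr) (gE n r hr) = R := by
    rw [hcoe]; ext i j; simp
  have hC : blkC n r hr ((Q⁻¹ : Matrix.GeneralLinearGroup (Fin n) ℤ) : Matrix (Fin n) (Fin n) ℤ)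
      = 0 := by unfold blkC; rw [hsub]; rfl
  have hA' : blkA n r hr ((Q⁻¹ : Matrix.GeneralLinearGroup (Fin n) ℤ) : Matrix (Fin n) (Fin n) ℤ)
      = A⁻¹ := by unfold blkA; rw [hsub]; rfl
  have hD' : blkD n r hr ((Q⁻¹ : Matrix.GeneralLinearGroup (Fin n) ℤ) : Matrix (Fin n) (Fin n) ℤ)
      = D⁻¹ := by unfold blkD; rw [hsub]; rfl
  exact ⟨inPar_of_blkC n r hr _ hC, hA', hD'⟩

lemma mat_eq_zero_of_mulVec {k l : ℕ} (M : Matrix (Fin k) (Fin l) ℤ)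
    (h : ∀ v, M.mulVec v = 0) : M = 0 := by
  ext i j
  have h2 := congrFun (h (Pi.single j 1)) i
  rw [Matrix.mulVec_single] at h2
  simpa using h2

lemma exists_M (f : (Fin n → ℤ) →ₗ[ℤ] (Fin r → ℤ)) (hf : Function.Surjective f) :
    ∃ M : Matrix.GeneralLinearGroup (Fin n) ℤ,
      ∀ v : Fin n → ℤ, f ((M : Matrix (Fin n) (Fin n) ℤ).mulVec v) = projl n r hr v := by
  obtain ⟨s, hs⟩ := Module.projective_lifting_property f LinearMap.id hf
  have hs' : ∀ y, f (s y) = y := fun y => congrArg (fun g => g y) hs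
  set K := LinearMap.ker f with hK
  set m := Module.finrank ℤ K with hm
  let bK : Module.Basis (Fin m) ℤ K :=
    (Module.Free.chooseBasis ℤ K).reindex
      (Fintype.equivFinOfCardEq (Module.finrank_eq_card_chooseBasisIndex ℤ K).symm)
  let eK : K ≃ₗ[ℤ] (Fin m → ℤ) := bK.equivFun
  -- the kernel projection
  have hker : ∀ x : Fin n → ℤ, x - s (f x) ∈ K := by
    intro x; simp [hK, LinearMap.mem_ker, map_sub, hs']
  let kp : (Fin n → ℤ) →ₗ[ℤ] K :=
    LinearMap.codRestrict K (LinearMap.id - s.comp f) hker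
  let fwd : ((Fin m → ℤ) × (Fin r → ℤ)) →ₗ[ℤ] (Fin n → ℤ) :=
    LinearMap.coprod (K.subtype.comp eK.symm.toLinearMap) s
  let bwd : (Fin n → ℤ) →ₗ[ℤ] ((Fin m → ℤ) × (Fin r → ℤ)) :=
    LinearMap.prod (eK.toLinearMap.comp kp) f
  have h1 : fwd.comp bwd = LinearMap.id := by
    apply LinearMap.ext; intro x
    simp only [fwd, bwd, kp, LinearMap.comp_apply, LinearMap.coprod_apply, LinearMap.prod_apply,
      Function.prod, LinearMap.id_apply, Submodule.coe_subtype, LinearEquiv.coe_coe,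
      LinearEquiv.symm_apply_apply, LinearMap.codRestrict_apply, LinearMap.sub_apply]
    abel
  have hkp : ∀ x : Fin n → ℤ, (kp x : Fin n → ℤ) = x - s (f x) := by
    intro x; rfl
  have h2 : bwd.comp fwd = LinearMap.id := by
    apply LinearMap.ext; intro z
    obtain ⟨z1, z2⟩ := z
    have hfz1 : f ((eK.symm z1 : Fin n → ℤ)) = 0 := (eK.symm z1).2
    have hfwd : fwd (z1, z2) = (eK.symm z1 : Fin n → ℤ) + s z2 := rfl
    have hkp2 : kp (fwd (z1, z2)) = eK.symm z1 := by
      apply Subtype.ext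
      rw [hkp, hfwd, map_add, hfz1, zero_add, hs']
      abel
    show (eK (kp (fwd (z1, z2))), f (fwd (z1, z2))) = (z1, z2)
    rw [hkp2, hfwd, map_add, hfz1, zero_add, hs']
    simp
  let esplit : ((Fin m → ℤ) × (Fin r → ℤ)) ≃ₗ[ℤ] (Fin n → ℤ) :=
    LinearEquiv.ofLinear fwd bwd h1 h2
  -- m + r = n
  have hmr : m + r = n := by
    have e1 := esplit.finrank_eq
    rw [Module.finrank_prod, Module.finrank_pi, Module.finrank_pi, Fintype.card_fin,
      Fintype.card_fin, Module.finrank_pi, Fintype.card_fin] at e1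
    exact e1
  have hmnr : m = n - r := by omega
  let castE : (Fin (n - r) → ℤ) ≃ₗ[ℤ] (Fin m → ℤ) :=
    LinearEquiv.funCongrLeft ℤ ℤ (finCongr hmnr)
  let splitE : (Fin n → ℤ) ≃ₗ[ℤ] ((Fin (n - r) → ℤ) × (Fin r → ℤ)) :=
    LinearEquiv.ofLinear (LinearMap.prod (resl n r hr) (projl n r hr))
      (LinearMap.coprod (embL n r hr) (embR n r hr))
      (by
        apply LinearMap.ext; intro z
        obtain ⟨z1, z2⟩ := z
        refine Prod.ext ?_ ?_
        · simp only [LinearMap.comp_apply, LinearMap.coprod_apply, LinearMap.prod_apply, Function.prod,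
            LinearMap.id_apply, map_add, resl_embL, resl_embR]
          simp [resl_embL, resl_embR]
        · simp only [LinearMap.comp_apply, LinearMap.coprod_apply, LinearMap.prod_apply, Function.prod,
            LinearMap.id_apply, map_add, projl_embL, projl_embR]
          simp [projl_embL, projl_embR])
      (by
        apply LinearMap.ext; intro x
        simp only [LinearMap.comp_apply, LinearMap.prod_apply, Function.prod, LinearMap.coprod_apply,
          LinearMap.id_apply]
        exact decomp n r hr x)
  let Mequiv : (Fin n → ℤ) ≃ₗ[ℤ] (Fin n → ℤ) :=
    (splitE.trans (castE.prodCongr (LinearEquiv.refl ℤ (Fin r → ℤ)))).trans esplit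
  have hM : ∀ v, f (Mequiv v) = projl n r hr v := by
    intro v
    show f (fwd (castE (resl n r hr v), projl n r hr v)) = projl n r hr v
    simp only [fwd, LinearMap.coprod_apply, Submodule.coe_subtype, LinearMap.comp_apply,
      LinearEquiv.coe_coe, map_add]
    rw [hs']
    have : f ((eK.symm (castE (resl n r hr v)) : (Fin n → ℤ))) = 0 :=
      (eK.symm (castE (resl n r hr v))).2
    rw [this, zero_add]
  -- now build the GL element
  let Mm := LinearMap.toMatrix' (Mequiv : (Fin n → ℤ) →ₗ[ℤ] (Fin n → ℤ))
  let Mi := LinearMap.toMatrix' (Mequiv.symm : (Fin n → ℤ) →ₗ[ℤ] (Fin n → ℤ))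
  have hcomp1 : (Mequiv : (Fin n → ℤ) →ₗ[ℤ] (Fin n → ℤ)).comp
      (Mequiv.symm : (Fin n → ℤ) →ₗ[ℤ] (Fin n → ℤ)) = LinearMap.id := by
    apply LinearMap.ext; intro x; simp
  have hcomp2 : (Mequiv.symm : (Fin n → ℤ) →ₗ[ℤ] (Fin n → ℤ)).comp
      (Mequiv : (Fin n → ℤ) →ₗ[ℤ] (Fin n → ℤ)) = LinearMap.id := by
    apply LinearMap.ext; intro x; simp
  have hv1 : Mm * Mi = 1 := by
    rw [← LinearMap.toMatrix'_comp, hcomp1, LinearMap.toMatrix'_id]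
  have hv2 : Mi * Mm = 1 := by
    rw [← LinearMap.toMatrix'_comp, hcomp2, LinearMap.toMatrix'_id]
  refine ⟨⟨Mm, Mi, hv1, hv2⟩, ?_⟩
  intro v
  have : (Mm : Matrix (Fin n) (Fin n) ℤ).mulVec v = Mequiv v := by
    rw [show Mm.mulVec v = Matrix.toLin' Mm v from (Matrix.toLin'_apply _ _).symm]
    rw [show Matrix.toLin' Mm = (Mequiv : (Fin n → ℤ) →ₗ[ℤ] (Fin n → ℤ)) from
      Matrix.toLin'_toMatrix' _]
    rfl
  rw [show ((⟨Mm, Mi, hv1, hv2⟩ : Matrix.GeneralLinearGroup (Fin n) ℤ) :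
    Matrix (Fin n) (Fin n) ℤ) = Mm from rfl, this]
  exact hM v

end Aux

section Main

/-- shear automorphism of a product -/
def shearE {X T : Type*} [AddCommGroup X] [AddCommGroup T] (φ : X →+ T) :
    (X × T) ≃+ (X × T) where
  toFun p := (p.1, p.2 + φ p.1)
  invFun p := (p.1, p.2 - φ p.1)
  left_inv p := by simp
  right_inv p := by simp
  map_add' p q := by
    refine Prod.ext rfl ?_
    simp only [Prod.fst_add, Prod.snd_add, map_add]
    abel

noncomputable def mulVecSq {k : ℕ} (U : Matrix (Fin k) (Fin k) ℤ) (hU : IsUnit U.det) :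
    (Fin k → ℤ) ≃+ (Fin k → ℤ) where
  toFun := U.mulVec
  invFun := U⁻¹.mulVec
  left_inv v := by
    rw [Matrix.mulVec_mulVec, Matrix.nonsing_inv_mul _ hU, Matrix.one_mulVec]
  right_inv v := by
    rw [Matrix.mulVec_mulVec, Matrix.mul_nonsing_inv _ hU, Matrix.one_mulVec]
  map_add' x y := by
    show U.mulVec (x + y) = U.mulVec x + U.mulVec y
    exact Matrix.mulVec_add U x y

theorem gammaRel_equiv (G A : Type*) [AddGroup G] [AddGroup A] :
    Equivalence (GammaRel G A) where
  refl ν := ⟨AddEquiv.refl A, fun g => rfl⟩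
  symm := fun {ν₁ ν₂} h => by
    obtain ⟨α, hα⟩ := h
    exact ⟨α.symm, fun g => by rw [← hα g, AddEquiv.symm_apply_apply]⟩
  trans := fun {ν₁ ν₂ ν₃} h h' => by
    obtain ⟨α, hα⟩ := h
    obtain ⟨β, hβ⟩ := h'
    exact ⟨α.trans β, fun g => by rw [AddEquiv.trans_apply, hα g, hβ g]⟩

theorem gamma_mk_eq_iff {G A : Type*} [AddGroup G] [AddGroup A] (x y : EpiSet G A) :
    (Quot.mk (GammaRel G A) x = Quot.mk (GammaRel G A) y) ↔ GammaRel G A x y := by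
  rw [Quot.eq]
  exact Equivalence.eqvGen_iff (gammaRel_equiv G A)

variable (n r : ℕ) (hr : r ≤ n) (T_H T_A : Type)
  [AddCommGroup T_H] [Finite T_H] [AddCommGroup T_A] [Finite T_A]

lemma GL_inv_mul_mulVec (M : Matrix.GeneralLinearGroup (Fin n) ℤ) (y : Fin n → ℤ) :
    ((M⁻¹ : Matrix.GeneralLinearGroup (Fin n) ℤ) : Matrix (Fin n) (Fin n) ℤ).mulVec
      ((M : Matrix (Fin n) (Fin n) ℤ).mulVec y) = y := by
  rw [Matrix.mulVec_mulVec, Units.inv_mul, Matrix.one_mulVec]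

lemma GL_mul_inv_mulVec (M : Matrix.GeneralLinearGroup (Fin n) ℤ) (y : Fin n → ℤ) :
    (M : Matrix (Fin n) (Fin n) ℤ).mulVec
      (((M⁻¹ : Matrix.GeneralLinearGroup (Fin n) ℤ) : Matrix (Fin n) (Fin n) ℤ).mulVec y) = y := by
  rw [Matrix.mulVec_mulVec, Units.mul_inv, Matrix.one_mulVec]

/-- The homomorphism `ν_{M,γ}`. -/
noncomputable def nuHom (M : Matrix.GeneralLinearGroup (Fin n) ℤ)
    (γ : ((Fin (n - r) → ℤ) × T_H) →+ T_A) :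
    ((Fin n → ℤ) × T_H) →+ ((Fin r → ℤ) × T_A) :=
  AddMonoidHom.prod
    ((((projl n r hr).comp
        (Matrix.mulVecLin ((M⁻¹ : Matrix.GeneralLinearGroup (Fin n) ℤ) :
          Matrix (Fin n) (Fin n) ℤ))).toAddMonoidHom).comp (AddMonoidHom.fst _ _))
    (γ.comp (AddMonoidHom.prodMap
      (((resl n r hr).comp
        (Matrix.mulVecLin ((M⁻¹ : Matrix.GeneralLinearGroup (Fin n) ℤ) :
          Matrix (Fin n) (Fin n) ℤ))).toAddMonoidHom)
      (AddMonoidHom.id T_H)))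

lemma nuHom_apply (M : Matrix.GeneralLinearGroup (Fin n) ℤ)
    (γ : ((Fin (n - r) → ℤ) × T_H) →+ T_A) (x : Fin n → ℤ) (t : T_H) :
    nuHom n r hr T_H T_A M γ (x, t) =
      (projl n r hr (((M⁻¹ : Matrix.GeneralLinearGroup (Fin n) ℤ) :
          Matrix (Fin n) (Fin n) ℤ).mulVec x),
       γ (resl n r hr (((M⁻¹ : Matrix.GeneralLinearGroup (Fin n) ℤ) :
          Matrix (Fin n) (Fin n) ℤ).mulVec x), t)) := rfl

lemma nu_surj (M : Matrix.GeneralLinearGroup (Fin n) ℤ)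
    (γ : ((Fin (n - r) → ℤ) × T_H) →+ T_A) (hγ : Function.Surjective γ) :
    Function.Surjective (nuHom n r hr T_H T_A M γ) := by
  rintro ⟨a, s⟩
  obtain ⟨⟨z, t⟩, hzt⟩ := hγ s
  set y := embL n r hr z + embR n r hr a with hy
  refine ⟨((M : Matrix (Fin n) (Fin n) ℤ).mulVec y, t), ?_⟩
  rw [nuHom_apply, GL_inv_mul_mulVec]
  have h1 : projl n r hr y = a := by
    rw [hy, map_add, projl_embL, projl_embR, zero_add]
  have h2 : resl n r hr y = z := by
    rw [hy, map_add, resl_embL, resl_embR, add_zero]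
  rw [h1, h2, hzt]

noncomputable def nuEpi (M : Matrix.GeneralLinearGroup (Fin n) ℤ)
    (γ : EpiSet ((Fin (n - r) → ℤ) × T_H) T_A) :
    EpiSet ((Fin n → ℤ) × T_H) ((Fin r → ℤ) × T_A) :=
  ⟨nuHom n r hr T_H T_A M γ.1, nu_surj n r hr T_H T_A M γ.1 γ.2⟩

noncomputable def bwd1 (M : Matrix.GeneralLinearGroup (Fin n) ℤ) :
    GammaSet ((Fin (n - r) → ℤ) × T_H) T_A →
      GammaSet ((Fin n → ℤ) × T_H) ((Fin r → ℤ) × T_A) :=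
  Quot.lift (fun γ => Quot.mk _ (nuEpi n r hr T_H T_A M γ)) (by
    intro γ δ hγδ
    obtain ⟨β, hβ⟩ := hγδ
    apply Quot.sound
    refine ⟨AddEquiv.prodCongr (AddEquiv.refl _) β, ?_⟩
    rintro ⟨x, t⟩
    refine Prod.ext rfl ?_
    exact hβ _)

noncomputable def bwdFun :
    (Matrix.GeneralLinearGroup (Fin n) ℤ × GammaSet ((Fin (n - r) → ℤ) × T_H) T_A) →
      GammaSet ((Fin n → ℤ) × T_H) ((Fin r → ℤ) × T_A) :=
  fun p => bwd1 n r hr T_H T_A p.1 p.2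

lemma bwd_respects (p q : Matrix.GeneralLinearGroup (Fin n) ℤ ×
      GammaSet ((Fin (n - r) → ℤ) × T_H) T_A) (h : TwistRel n r T_H T_A p q) :
    bwdFun n r hr T_H T_A p = bwdFun n r hr T_H T_A q := by
  obtain ⟨p1, p2⟩ := p
  obtain ⟨q1, q2⟩ := q
  obtain ⟨M, Q, γ, δ, hQ, hp1, hp2, hq1, hq2, hδ⟩ := h
  simp only at hp1 hp2 hq1 hq2
  rw [hp1, hp2, hq1, hq2]
  show Quot.mk _ (nuEpi n r hr T_H T_A (M * Q) γ) = Quot.mk _ (nuEpi n r hr T_H T_A M δ)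
  apply Quot.sound
  apply (gammaRel_equiv _ _).symm
  have hPar' := (inv_blocks n r hr Q hQ).1
  have hA' := (inv_blocks n r hr Q hQ).2.1
  have hDet : IsUnit (blkD n r hr ((Q⁻¹ : Matrix.GeneralLinearGroup (Fin n) ℤ) :
      Matrix (Fin n) (Fin n) ℤ)).det := (isUnit_det_blk n r hr Q⁻¹ hPar').2
  have hCzero := blkC_eq_zero n r hr Q⁻¹ hPar'
  set Qi : Matrix (Fin n) (Fin n) ℤ :=
    ((Q⁻¹ : Matrix.GeneralLinearGroup (Fin n) ℤ) : Matrix (Fin n) (Fin n) ℤ) with hQi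
  let φ : (Fin r → ℤ) →+ T_A :=
    γ.1.comp ((AddMonoidHom.inl (Fin (n - r) → ℤ) T_H).comp
      (Matrix.mulVecLin (blkB n r hr Qi)).toAddMonoidHom)
  refine ⟨(shearE φ).trans
    (AddEquiv.prodCongr (mulVecSq (blkD n r hr Qi) hDet) (AddEquiv.refl T_A)), ?_⟩
  rintro ⟨x, t⟩
  have hαap : ∀ (a : Fin r → ℤ) (s : T_A),
      ((shearE φ).trans (AddEquiv.prodCongr (mulVecSq (blkD n r hr Qi) hDet)
        (AddEquiv.refl T_A))) (a, s)
      = ((blkD n r hr Qi).mulVec a, s + φ a) := fun a s => rfl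
  simp only [nuEpi]
  have hw : (((M * Q)⁻¹ : Matrix.GeneralLinearGroup (Fin n) ℤ) :
      Matrix (Fin n) (Fin n) ℤ).mulVec x
      = Qi.mulVec (((M⁻¹ : Matrix.GeneralLinearGroup (Fin n) ℤ) :
        Matrix (Fin n) (Fin n) ℤ).mulVec x) := by
    rw [_root_.mul_inv_rev, Units.val_mul, ← Matrix.mulVec_mulVec]
  have key : ∀ y : Fin n → ℤ,
      ((blkD n r hr Qi).mulVec (projl n r hr y),
        δ.1 (resl n r hr y, t) + φ (projl n r hr y))
      = (projl n r hr (Qi.mulVec y), γ.1 (resl n r hr (Qi.mulVec y), t)) := by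
    intro y
    have hδ' : δ.1 (resl n r hr y, t) = γ.1 ((blkA n r hr Qi).mulVec (resl n r hr y), t) := by
      rw [hδ]
      show γ.1 (actHom n r T_H Q (resl n r hr y, t)) = _
      have ha : actHom n r T_H Q (resl n r hr y, t)
          = ((blockInv n r Q).mulVec (resl n r hr y), t) := rfl
      rw [ha, blockInv_eq n r hr, ← hA']
    refine Prod.ext ?_ ?_
    · show (blkD n r hr Qi).mulVec (projl n r hr y) = projl n r hr (Qi.mulVec y)
      rw [proj_mulVec, hCzero, Matrix.zero_mulVec, zero_add]
    · show δ.1 (resl n r hr y, t) + φ (projl n r hr y)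
        = γ.1 (resl n r hr (Qi.mulVec y), t)
      have h2 : φ (projl n r hr y)
          = γ.1 ((blkB n r hr Qi).mulVec (projl n r hr y), 0) := rfl
      rw [res_mulVec, hδ', h2, ← map_add]
      congr 1
      refine Prod.ext rfl (add_zero t)
  rw [nuHom_apply, nuHom_apply, hw, hαap]
  exact key _

noncomputable def bwdQ : Quot (TwistRel n r T_H T_A) →
    GammaSet ((Fin n → ℤ) × T_H) ((Fin r → ℤ) × T_A) :=
  Quot.lift (bwdFun n r hr T_H T_A) (bwd_respects n r hr T_H T_A)

lemma bwdQ_inj : Function.Injective (bwdQ n r hr T_H T_A) := by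
  intro p q hpq
  obtain ⟨⟨M, c⟩, rfl⟩ := Quot.exists_rep p
  obtain ⟨⟨M', c'⟩, rfl⟩ := Quot.exists_rep q
  obtain ⟨γ, rfl⟩ := Quot.exists_rep c
  obtain ⟨γ', rfl⟩ := Quot.exists_rep c'
  have hpq' : Quot.mk (GammaRel _ _) (nuEpi n r hr T_H T_A M γ)
      = Quot.mk _ (nuEpi n r hr T_H T_A M' γ') := hpq
  obtain ⟨α, hα⟩ := (gamma_mk_eq_iff _ _).mp hpq'
  have hMQ : M = M' * (M'⁻¹ * M) := by group
  -- base identity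
  have hbase : ∀ (y : Fin n → ℤ) (t : T_H),
      α (projl n r hr y, γ.1 (resl n r hr y, t))
        = (projl n r hr (((M'⁻¹ * M : Matrix.GeneralLinearGroup (Fin n) ℤ) :
            Matrix (Fin n) (Fin n) ℤ).mulVec y),
           γ'.1 (resl n r hr (((M'⁻¹ * M : Matrix.GeneralLinearGroup (Fin n) ℤ) :
            Matrix (Fin n) (Fin n) ℤ).mulVec y), t)) := by
    intro y t
    have h1 := hα (((M : Matrix.GeneralLinearGroup (Fin n) ℤ) :
      Matrix (Fin n) (Fin n) ℤ).mulVec y, t)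
    rw [show ((nuEpi n r hr T_H T_A M γ).1 : _ →+ _) = nuHom n r hr T_H T_A M γ.1 from rfl,
      show ((nuEpi n r hr T_H T_A M' γ').1 : _ →+ _) = nuHom n r hr T_H T_A M' γ'.1 from rfl,
      nuHom_apply, nuHom_apply, GL_inv_mul_mulVec, Matrix.mulVec_mulVec,
      ← Units.val_mul] at h1
    exact h1
  -- components of α
  have hπ0 : ∀ s : T_A, (α ((0 : Fin r → ℤ), s)).1 = 0 := fun s =>
    fin_hom_eq_zero ((AddMonoidHom.fst (Fin r → ℤ) T_A).comp
      (α.toAddMonoidHom.comp (AddMonoidHom.inr (Fin r → ℤ) T_A))) s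
  have hπ0' : ∀ s : T_A, (α.symm ((0 : Fin r → ℤ), s)).1 = 0 := fun s =>
    fin_hom_eq_zero ((AddMonoidHom.fst (Fin r → ℤ) T_A).comp
      (α.symm.toAddMonoidHom.comp (AddMonoidHom.inr (Fin r → ℤ) T_A))) s
  let βE : T_A ≃+ T_A := {
    toFun := fun s => (α ((0 : Fin r → ℤ), s)).2
    invFun := fun s => (α.symm ((0 : Fin r → ℤ), s)).2
    left_inv := by
      intro s
      show (α.symm ((0 : Fin r → ℤ), (α ((0 : Fin r → ℤ), s)).2)).2 = s
      have h0 : (((0 : Fin r → ℤ), (α ((0 : Fin r → ℤ), s)).2) : (Fin r → ℤ) × T_A)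
          = α ((0 : Fin r → ℤ), s) := Prod.ext (hπ0 s).symm rfl
      rw [h0, AddEquiv.symm_apply_apply]
    right_inv := by
      intro s
      show (α ((0 : Fin r → ℤ), (α.symm ((0 : Fin r → ℤ), s)).2)).2 = s
      have h0 : (((0 : Fin r → ℤ), (α.symm ((0 : Fin r → ℤ), s)).2) : (Fin r → ℤ) × T_A)
          = α.symm ((0 : Fin r → ℤ), s) := Prod.ext (hπ0' s).symm rfl
      rw [h0, AddEquiv.apply_symm_apply]
    map_add' := by
      intro s s'
      show (α ((0 : Fin r → ℤ), s + s')).2 = (α ((0 : Fin r → ℤ), s)).2 + (α ((0 : Fin r → ℤ), s')).2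
      have h0 : (((0 : Fin r → ℤ), s + s') : (Fin r → ℤ) × T_A)
          = ((0 : Fin r → ℤ), s) + ((0 : Fin r → ℤ), s') := by
        refine Prod.ext (by simp) rfl
      rw [h0, map_add]
      rfl }
  -- InPar
  have hx1 : ∀ z : Fin (n - r) → ℤ,
      (blkC n r hr (((M'⁻¹ * M : Matrix.GeneralLinearGroup (Fin n) ℤ) :
        Matrix (Fin n) (Fin n) ℤ))).mulVec z = 0 := by
    intro z
    have h := congrArg Prod.fst (hbase (embL n r hr z) 0)
    rw [projl_embL] at h
    rw [hπ0, proj_mulVec, resl_embL, projl_embL, Matrix.mulVec_zero, add_zero] at h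
    exact h.symm
  have hC0 : blkC n r hr (((M'⁻¹ * M : Matrix.GeneralLinearGroup (Fin n) ℤ) :
      Matrix (Fin n) (Fin n) ℤ)) = 0 := mat_eq_zero_of_mulVec _ hx1
  have hPar : InPar n r (M'⁻¹ * M) := inPar_of_blkC n r hr _ hC0
  have hA : IsUnit (blkA n r hr (((M'⁻¹ * M : Matrix.GeneralLinearGroup (Fin n) ℤ) :
      Matrix (Fin n) (Fin n) ℤ))).det := (isUnit_det_blk n r hr _ hPar).1
  -- key equation
  have hE2 : ∀ (z : Fin (n - r) → ℤ) (t : T_H),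
      (α ((0 : Fin r → ℤ), γ.1 (z, t))).2
        = γ'.1 ((blkA n r hr (((M'⁻¹ * M : Matrix.GeneralLinearGroup (Fin n) ℤ) :
            Matrix (Fin n) (Fin n) ℤ))).mulVec z, t) := by
    intro z t
    have h := congrArg Prod.snd (hbase (embL n r hr z) t)
    rw [projl_embL, res_mulVec, resl_embL, projl_embL, Matrix.mulVec_zero, add_zero] at h
    exact h
  -- δ
  have hactsurj : Function.Surjective (actHom n r T_H (M'⁻¹ * M)) := by
    rintro ⟨w, t⟩
    refine ⟨((blkA n r hr (((M'⁻¹ * M : Matrix.GeneralLinearGroup (Fin n) ℤ) :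
      Matrix (Fin n) (Fin n) ℤ))).mulVec w, t), ?_⟩
    refine Prod.ext ?_ rfl
    show (blockInv n r (M'⁻¹ * M)).mulVec
      ((blkA n r hr (((M'⁻¹ * M : Matrix.GeneralLinearGroup (Fin n) ℤ) :
        Matrix (Fin n) (Fin n) ℤ))).mulVec w) = w
    rw [blockInv_eq n r hr, Matrix.mulVec_mulVec, Matrix.nonsing_inv_mul _ hA,
      Matrix.one_mulVec]
  have hδsurj : Function.Surjective (γ.1.comp (actHom n r T_H (M'⁻¹ * M))) := by
    intro sT
    obtain ⟨d, hd⟩ := γ.2 sT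
    obtain ⟨w, hw⟩ := hactsurj d
    exact ⟨w, by rw [AddMonoidHom.comp_apply, hw, hd]⟩
  set δ : EpiSet ((Fin (n - r) → ℤ) × T_H) T_A :=
    ⟨γ.1.comp (actHom n r T_H (M'⁻¹ * M)), hδsurj⟩ with hδdef
  have hrel2 : GammaRel _ _ δ γ' := by
    refine ⟨βE, ?_⟩
    rintro ⟨w, t⟩
    show (α ((0 : Fin r → ℤ), δ.1 (w, t))).2 = γ'.1 (w, t)
    have hδw : δ.1 (w, t) = γ.1 ((blkA n r hr (((M'⁻¹ * M : Matrix.GeneralLinearGroup (Fin n) ℤ) :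
        Matrix (Fin n) (Fin n) ℤ)))⁻¹.mulVec w, t) := by
      show γ.1 ((blockInv n r (M'⁻¹ * M)).mulVec w, t) = _
      rw [blockInv_eq n r hr]
    rw [hδw, hE2]
    congr 1
    refine Prod.ext ?_ rfl
    rw [Matrix.mulVec_mulVec, Matrix.mul_nonsing_inv _ hA, Matrix.one_mulVec]
  have step1 : Quot.mk (TwistRel n r T_H T_A) (M, Quot.mk _ γ)
      = Quot.mk _ (M', Quot.mk _ δ) :=
    Quot.sound ⟨M', M'⁻¹ * M, γ, δ, hPar, hMQ, rfl, rfl, rfl, rfl⟩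
  have step2 : Quot.mk (GammaRel ((Fin (n - r) → ℤ) × T_H) T_A) δ = Quot.mk _ γ' :=
    Quot.sound hrel2
  rw [step1, step2]
  rfl

lemma bwdQ_surj : Function.Surjective (bwdQ n r hr T_H T_A) := by
  intro c
  obtain ⟨ν, rfl⟩ := Quot.exists_rep c
  have hν0 : ∀ t : T_H, (ν.1 ((0 : Fin n → ℤ), t)).1 = 0 := fun t =>
    fin_hom_eq_zero ((AddMonoidHom.fst (Fin r → ℤ) T_A).comp
      (ν.1.comp (AddMonoidHom.inr (Fin n → ℤ) T_H))) t
  set f : (Fin n → ℤ) →ₗ[ℤ] (Fin r → ℤ) :=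
    ((AddMonoidHom.fst (Fin r → ℤ) T_A).comp
      (ν.1.comp (AddMonoidHom.inl (Fin n → ℤ) T_H))).toIntLinearMap with hfdef
  have hf1 : ∀ (x : Fin n → ℤ) (t : T_H), (ν.1 (x, t)).1 = f x := by
    intro x t
    have hxt : ((x, t) : (Fin n → ℤ) × T_H) = (x, 0) + (0, t) := by
      refine Prod.ext (by simp) (by simp)
    rw [hxt, map_add]
    show (ν.1 (x, 0)).1 + (ν.1 ((0 : Fin n → ℤ), t)).1 = f x
    rw [hν0, add_zero]
    rfl
  have hfs : Function.Surjective f := by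
    intro a
    obtain ⟨⟨x, t⟩, hxt⟩ := ν.2 (a, 0)
    exact ⟨x, by rw [← hf1 x t, hxt]⟩
  obtain ⟨M, hM⟩ := exists_M n r hr f hfs
  set inner : ((Fin (n - r) → ℤ) × T_H) →+ ((Fin n → ℤ) × T_H) :=
    AddMonoidHom.prodMap
      (((Matrix.mulVecLin ((M : Matrix.GeneralLinearGroup (Fin n) ℤ) :
        Matrix (Fin n) (Fin n) ℤ)).comp (embL n r hr)).toAddMonoidHom)
      (AddMonoidHom.id T_H) with hinner
  set γh : ((Fin (n - r) → ℤ) × T_H) →+ T_A :=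
    (AddMonoidHom.snd (Fin r → ℤ) T_A).comp (ν.1.comp inner) with hγh
  have hγap : ∀ (z : Fin (n - r) → ℤ) (t : T_H),
      γh (z, t) = (ν.1 (((M : Matrix.GeneralLinearGroup (Fin n) ℤ) :
        Matrix (Fin n) (Fin n) ℤ).mulVec (embL n r hr z), t)).2 := fun z t => rfl
  have hγs : Function.Surjective γh := by
    intro sT
    obtain ⟨⟨x, t⟩, hxt⟩ := ν.2 (0, sT)
    refine ⟨(resl n r hr (((M⁻¹ : Matrix.GeneralLinearGroup (Fin n) ℤ) :
      Matrix (Fin n) (Fin n) ℤ).mulVec x), t), ?_⟩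
    have hproj : projl n r hr (((M⁻¹ : Matrix.GeneralLinearGroup (Fin n) ℤ) :
        Matrix (Fin n) (Fin n) ℤ).mulVec x) = 0 := by
      rw [← hM (((M⁻¹ : Matrix.GeneralLinearGroup (Fin n) ℤ) :
        Matrix (Fin n) (Fin n) ℤ).mulVec x), GL_mul_inv_mulVec, ← hf1 x t, hxt]
    have hx : ((M : Matrix.GeneralLinearGroup (Fin n) ℤ) : Matrix (Fin n) (Fin n) ℤ).mulVec
        (embL n r hr (resl n r hr (((M⁻¹ : Matrix.GeneralLinearGroup (Fin n) ℤ) :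
          Matrix (Fin n) (Fin n) ℤ).mulVec x))) = x := by
      conv_rhs => rw [← GL_mul_inv_mulVec n M x]
      congr 1
      conv_rhs => rw [← decomp n r hr (((M⁻¹ : Matrix.GeneralLinearGroup (Fin n) ℤ) :
        Matrix (Fin n) (Fin n) ℤ).mulVec x)]
      rw [hproj, map_zero, add_zero]
    rw [hγap, hx, hxt]
  set ψ : (Fin r → ℤ) →+ T_A :=
    (AddMonoidHom.snd (Fin r → ℤ) T_A).comp (ν.1.comp
      ((AddMonoidHom.inl (Fin n → ℤ) T_H).comp
        (((Matrix.mulVecLin ((M : Matrix.GeneralLinearGroup (Fin n) ℤ) :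
          Matrix (Fin n) (Fin n) ℤ)).comp (embR n r hr)).toAddMonoidHom))) with hψ
  refine ⟨Quot.mk _ (M, Quot.mk _ (⟨γh, hγs⟩ : EpiSet ((Fin (n - r) → ℤ) × T_H) T_A)), ?_⟩
  show Quot.mk _ (nuEpi n r hr T_H T_A M ⟨γh, hγs⟩) = Quot.mk _ ν
  apply Quot.sound
  refine ⟨shearE ψ, ?_⟩
  rintro ⟨x, t⟩
  have key : ∀ y : Fin n → ℤ,
      (shearE ψ) ((nuEpi n r hr T_H T_A M ⟨γh, hγs⟩).1
        (((M : Matrix.GeneralLinearGroup (Fin n) ℤ) : Matrix (Fin n) (Fin n) ℤ).mulVec y, t))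
      = ν.1 (((M : Matrix.GeneralLinearGroup (Fin n) ℤ) :
          Matrix (Fin n) (Fin n) ℤ).mulVec y, t) := by
    intro y
    have hsplit : ((((M : Matrix.GeneralLinearGroup (Fin n) ℤ) :
        Matrix (Fin n) (Fin n) ℤ).mulVec y, t) : (Fin n → ℤ) × T_H)
        = (((M : Matrix.GeneralLinearGroup (Fin n) ℤ) :
            Matrix (Fin n) (Fin n) ℤ).mulVec (embL n r hr (resl n r hr y)), t)
          + (((M : Matrix.GeneralLinearGroup (Fin n) ℤ) :
            Matrix (Fin n) (Fin n) ℤ).mulVec (embR n r hr (projl n r hr y)), 0) := by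
      refine Prod.ext ?_ (add_zero t).symm
      show ((M : Matrix.GeneralLinearGroup (Fin n) ℤ) :
        Matrix (Fin n) (Fin n) ℤ).mulVec y = _ + _
      conv_lhs => rw [← decomp n r hr y]
      exact Matrix.mulVec_add _ _ _
    have hLHS : (nuEpi n r hr T_H T_A M ⟨γh, hγs⟩).1
        (((M : Matrix.GeneralLinearGroup (Fin n) ℤ) : Matrix (Fin n) (Fin n) ℤ).mulVec y, t)
        = (projl n r hr y, γh (resl n r hr y, t)) := by
      show nuHom n r hr T_H T_A M γh
        (((M : Matrix.GeneralLinearGroup (Fin n) ℤ) : Matrix (Fin n) (Fin n) ℤ).mulVec y, t) = _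
      rw [nuHom_apply, GL_inv_mul_mulVec]
    rw [hLHS]
    show (projl n r hr y, γh (resl n r hr y, t) + ψ (projl n r hr y)) = _
    conv_rhs => rw [hsplit]
    rw [map_add]
    refine Prod.ext ?_ ?_
    · show projl n r hr y
        = (ν.1 (((M : Matrix.GeneralLinearGroup (Fin n) ℤ) :
            Matrix (Fin n) (Fin n) ℤ).mulVec (embL n r hr (resl n r hr y)), t)).1
          + (ν.1 (((M : Matrix.GeneralLinearGroup (Fin n) ℤ) :
            Matrix (Fin n) (Fin n) ℤ).mulVec (embR n r hr (projl n r hr y)), 0)).1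
      rw [hf1, hf1, hM, hM, projl_embL, projl_embR, zero_add]
    · show γh (resl n r hr y, t) + ψ (projl n r hr y)
        = (ν.1 (((M : Matrix.GeneralLinearGroup (Fin n) ℤ) :
            Matrix (Fin n) (Fin n) ℤ).mulVec (embL n r hr (resl n r hr y)), t)).2
          + (ν.1 (((M : Matrix.GeneralLinearGroup (Fin n) ℤ) :
            Matrix (Fin n) (Fin n) ℤ).mulVec (embR n r hr (projl n r hr y)), 0)).2
      exact congrArg₂ (· + ·) (hγap _ _) rfl
  have hx2 := key (((M⁻¹ : Matrix.GeneralLinearGroup (Fin n) ℤ) :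
    Matrix (Fin n) (Fin n) ℤ).mulVec x)
  rw [GL_mul_inv_mulVec] at hx2
  exact hx2

end Main




/-- The parameter set `Γ(H, A)` for `H = ℤⁿ × T_H` and `A = ℤʳ × T_A` is in bijection
with the twisted product `GL_n(ℤ) ×_P Γ`, where `Γ = Γ(ℤ^{n-r} × T_H, T_A)`. -/
theorem statement2 (n r : ℕ) (hr : r ≤ n) (T_H T_A : Type)
    [AddCommGroup T_H] [Finite T_H] [AddCommGroup T_A] [Finite T_A] :
    Nonempty (GammaSet ((Fin n → ℤ) × T_H) ((Fin r → ℤ) × T_A) ≃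
      Quot (TwistRel n r T_H T_A)) :=
  ⟨(Equiv.ofBijective (bwdQ n r hr T_H T_A)
    ⟨bwdQ_inj n r hr T_H T_A, bwdQ_surj n r hr T_H T_A⟩).symm⟩
end

section
/- Let p be a prime and let m, s, t be nonnegative integers. Then the quotient set Epi(ℤ^m × (ℤ/p)^s, (ℤ/p)^t)/Aut((ℤ/p)^t) is in bijection with the set of t-dimensional 𝔽_p-linear subspaces of the vector space 𝔽_p^{m+s}. (This identifies the fiber set Γ = Γ(H/Ā, A/Ā) appearing in the twisted-product description of Γ(H, A), for H = ℤⁿ × (ℤ/p)^s and A = ℤʳ × (ℤ/p)^t with r ≤ n and m = n − r, with the Grassmannian of t-planes in 𝔽_p^{n−r+s}.) -/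
namespace Stmt4Aux

variable (p m s t : ℕ) [Fact p.Prime]

local notation "K" => ZMod p

/-- The reduction map `ℤᵐ × (ℤ/p)ˢ →+ (ℤ/p)ᵐ × (ℤ/p)ˢ`. -/
def red : ((Fin m → ℤ) × (Fin s → K)) →+ ((Fin m → K) × (Fin s → K)) :=
  AddMonoidHom.prodMap
    { toFun := fun x i => ((x i : ℤ) : K)
      map_zero' := by funext i; simp
      map_add' := by intro x y; funext i; push_cast; simp }
    (AddMonoidHom.id _)

lemma red_surjective : Function.Surjective (red p m s) := by
  rintro ⟨v, w⟩
  refine ⟨⟨fun i => ((v i).val : ℤ), w⟩, ?_⟩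
  simp only [red, AddMonoidHom.prodMap, AddMonoidHom.coe_mk, ZeroHom.coe_mk,
    AddMonoidHom.coe_prodMap]
  refine Prod.ext ?_ rfl
  funext i
  push_cast
  simp [ZMod.natCast_val, ZMod.cast_id]

lemma exists_factor (f : ((Fin m → ℤ) × (Fin s → K)) →+ (Fin t → K)) :
    ∃ g : ((Fin m → K) × (Fin s → K)) →ₗ[K] (Fin t → K),
      ∀ a, g (red p m s a) = f a := by
  classical
  set f₁ : (Fin m → ℤ) →+ (Fin t → K) := f.comp (AddMonoidHom.inl _ _) with hf₁
  set f₂ : (Fin s → K) →+ (Fin t → K) := f.comp (AddMonoidHom.inr _ _) with hf₂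
  set g₁ : (Fin m → K) →ₗ[K] (Fin t → K) :=
    (Pi.basisFun K (Fin m)).constr K (fun j => f₁ (Pi.single j 1)) with hg₁
  set g₂ : (Fin s → K) →ₗ[K] (Fin t → K) := f₂.toZModLinearMap p with hg₂
  refine ⟨g₁.coprod g₂, ?_⟩
  have key : ∀ x : Fin m → ℤ, g₁ (fun i => ((x i : ℤ) : K)) = f₁ x := by
    have h : (g₁.toAddMonoidHom.comp
        { toFun := fun x : Fin m → ℤ => fun i => ((x i : ℤ) : K)
          map_zero' := by funext i; simp
          map_add' := by intro x y; funext i; push_cast; simp } : (Fin m → ℤ) →+ (Fin t → K))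
        = f₁ := by
      apply AddMonoidHom.functions_ext
      intro j z
      simp only [AddMonoidHom.coe_comp, AddMonoidHom.coe_mk, ZeroHom.coe_mk,
        Function.comp_apply, LinearMap.toAddMonoidHom_coe]
      have h1 : (fun i => (((Pi.single j z : Fin m → ℤ) i : ℤ) : K)) = Pi.single j ((z : ℤ) : K) := by
        funext i
        by_cases hij : i = j
        · subst hij; simp
        · simp [Pi.single_apply, hij]
      rw [h1]
      have h2 : (Pi.single j ((z : ℤ) : K) : Fin m → K)
          = ((z : ℤ) : K) • Pi.basisFun K (Fin m) j := by
        simp [Pi.basisFun_apply]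
        rw [← Pi.single_smul, smul_eq_mul, mul_one]
      rw [h2, map_smul, Module.Basis.constr_basis]
      have h3 : (Pi.single j z : Fin m → ℤ) = z • Pi.single j (1 : ℤ) := by
        rw [← Pi.single_smul, smul_eq_mul, mul_one]
      rw [h3, map_zsmul, Int.cast_smul_eq_zsmul]
    intro x
    exact DFunLike.congr_fun h x
  rintro ⟨x, y⟩
  have hsplit : f (x, y) = f₁ x + f₂ y := by
    rw [hf₁, hf₂]
    simp only [AddMonoidHom.coe_comp, Function.comp_apply, AddMonoidHom.inl_apply,
      AddMonoidHom.inr_apply]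
    rw [← map_add]
    simp
  rw [hsplit]
  show g₁.coprod g₂ ((fun i => ((x i : ℤ) : K)), y) = f₁ x + f₂ y
  rw [LinearMap.coprod_apply, key x]
  rfl

open Module Submodule LinearMap

/-- Step 1: EpiSet over the vector space vs over the original group. -/
noncomputable def epiEquiv :
    {g : ((Fin m → K) × (Fin s → K)) →+ (Fin t → K) // Function.Surjective g} ≃
    {f : ((Fin m → ℤ) × (Fin s → K)) →+ (Fin t → K) // Function.Surjective f} := by
  apply Equiv.ofBijective
    (fun g => ⟨g.1.comp (red p m s), g.2.comp (red_surjective p m s)⟩)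
  constructor
  · rintro ⟨g₁, h₁⟩ ⟨g₂, h₂⟩ h
    have h' : g₁.comp (red p m s) = g₂.comp (red p m s) := congrArg Subtype.val h
    refine Subtype.ext (AddMonoidHom.ext fun v => ?_)
    obtain ⟨a, rfl⟩ := red_surjective p m s v
    exact DFunLike.congr_fun h' a
  · rintro ⟨f, hf⟩
    obtain ⟨g, hg⟩ := exists_factor p m s t f
    refine ⟨⟨g.toAddMonoidHom, ?_⟩, Subtype.ext (AddMonoidHom.ext fun a => hg a)⟩
    intro w
    obtain ⟨a, ha⟩ := hf w
    exact ⟨red p m s a, by rw [LinearMap.toAddMonoidHom_coe, hg a, ha]⟩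


/-- Compute `quotKerEquivOfSurjective` on `mk x`. -/
lemma qke_mk {M N : Type*} [AddCommGroup M] [AddCommGroup N] [Module K M] [Module K N]
    (f : M →ₗ[K] N) (hf : Function.Surjective f) (x : M) :
    f.quotKerEquivOfSurjective hf (Submodule.Quotient.mk x) = f x := by
  simp [LinearMap.quotKerEquivOfSurjective, LinearMap.quotKerEquivRange_apply_mk]

/-- The relation on surjective hom classes over the vector space. -/
def vrel (g₁ g₂ : {g : ((Fin m → K) × (Fin s → K)) →+ (Fin t → K) //
    Function.Surjective g}) : Prop :=
  ∃ α : (Fin t → K) ≃+ (Fin t → K), ∀ v, α (g₁.1 v) = g₂.1 v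

lemma krel (g : {g : ((Fin m → K) × (Fin s → K)) →+ (Fin t → K) // Function.Surjective g}) :
    finrank K (((Fin m → K) × (Fin s → K)) ⧸ LinearMap.ker (g.1.toZModLinearMap p)) = t := by
  have hs : Function.Surjective (g.1.toZModLinearMap p) := g.2
  have := LinearEquiv.finrank_eq ((g.1.toZModLinearMap p).quotKerEquivOfSurjective hs)
  rw [this]
  simp [Module.finrank_pi]

/-- The kernel, as an element of the codimension-`t` Grassmannian. -/
noncomputable def kerMap
    (g : {g : ((Fin m → K) × (Fin s → K)) →+ (Fin t → K) // Function.Surjective g}) :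
    {W : Submodule K ((Fin m → K) × (Fin s → K)) //
      finrank K (((Fin m → K) × (Fin s → K)) ⧸ W) = t} :=
  ⟨LinearMap.ker (g.1.toZModLinearMap p), krel p m s t g⟩

lemma kerMap_rel {g₁ g₂ : {g : ((Fin m → K) × (Fin s → K)) →+ (Fin t → K) //
    Function.Surjective g}} (h : vrel p m s t g₁ g₂) :
    kerMap p m s t g₁ = kerMap p m s t g₂ := by
  obtain ⟨α, hα⟩ := h
  refine Subtype.ext (SetLike.ext fun v => ?_)
  simp only [kerMap, LinearMap.mem_ker, AddMonoidHom.coe_toZModLinearMap]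
  constructor
  · intro h; rw [← hα, h, map_zero]
  · intro h; rw [← hα] at h; exact (AddEquiv.map_eq_zero_iff α).mp h

/-- Step 2 map: from the Gamma set over the vector space to codim-`t` subspaces. -/
noncomputable def gammaToKerFun :
    Quot (vrel p m s t) →
    {W : Submodule K ((Fin m → K) × (Fin s → K)) //
      finrank K (((Fin m → K) × (Fin s → K)) ⧸ W) = t} :=
  Quot.lift (kerMap p m s t) (fun _ _ h => kerMap_rel p m s t h)

lemma gammaToKerFun_injective : Function.Injective (gammaToKerFun p m s t) := by
  intro c₁ c₂
  induction c₁ using Quot.ind with | _ g₁ => ?_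
  induction c₂ using Quot.ind with | _ g₂ => ?_
  intro h
  have hker : LinearMap.ker (g₁.1.toZModLinearMap p) = LinearMap.ker (g₂.1.toZModLinearMap p) :=
    congrArg Subtype.val h
  apply Quot.sound
  have hs₁ : Function.Surjective (g₁.1.toZModLinearMap p) := g₁.2
  have hs₂ : Function.Surjective (g₂.1.toZModLinearMap p) := g₂.2
  set e : (Fin t → K) ≃ₗ[K] (Fin t → K) :=
    ((g₁.1.toZModLinearMap p).quotKerEquivOfSurjective hs₁).symm ≪≫ₗ
      (Submodule.quotEquivOfEq _ _ hker ≪≫ₗ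
        (g₂.1.toZModLinearMap p).quotKerEquivOfSurjective hs₂) with he
  refine ⟨e.toAddEquiv, fun v => ?_⟩
  have h1 : ((g₁.1.toZModLinearMap p).quotKerEquivOfSurjective hs₁).symm (g₁.1 v)
      = Submodule.Quotient.mk v := by
    rw [LinearEquiv.symm_apply_eq, qke_mk]
    rfl
  show e (g₁.1 v) = g₂.1 v
  rw [he]
  simp only [LinearEquiv.trans_apply, h1, Submodule.quotEquivOfEq_mk]
  rw [qke_mk]
  rfl

lemma gammaToKerFun_surjective : Function.Surjective (gammaToKerFun p m s t) := by
  rintro ⟨W, hW⟩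
  have hfr : finrank K (((Fin m → K) × (Fin s → K)) ⧸ W) = finrank K (Fin t → K) := by
    rw [hW]; simp [Module.finrank_pi]
  set e : (((Fin m → K) × (Fin s → K)) ⧸ W) ≃ₗ[K] (Fin t → K) :=
    LinearEquiv.ofFinrankEq _ _ hfr with he
  set g : ((Fin m → K) × (Fin s → K)) →ₗ[K] (Fin t → K) := e.toLinearMap ∘ₗ W.mkQ with hg
  have hgs : Function.Surjective g := e.surjective.comp W.mkQ_surjective
  refine ⟨Quot.mk _ ⟨g.toAddMonoidHom, hgs⟩, Subtype.ext ?_⟩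
  show LinearMap.ker ((g.toAddMonoidHom).toZModLinearMap p) = W
  have : (g.toAddMonoidHom).toZModLinearMap p = g := by
    apply LinearMap.ext; intro x; rfl
  rw [this, hg, LinearMap.ker_comp, LinearEquiv.ker, Submodule.comap_bot, Submodule.ker_mkQ]

/-- Step 2: from the Gamma set over the vector space to codimension-`t` subspaces. -/
noncomputable def gammaToKer :
    Quot (vrel p m s t) ≃
    {W : Submodule K ((Fin m → K) × (Fin s → K)) //
      finrank K (((Fin m → K) × (Fin s → K)) ⧸ W) = t} :=
  Equiv.ofBijective (gammaToKerFun p m s t)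
    ⟨gammaToKerFun_injective p m s t, gammaToKerFun_surjective p m s t⟩


/-- Step 3: the codimension-`t` Grassmannian is in bijection with the dimension-`t`
Grassmannian, via Schröder–Bernstein applied to the dual annihilator maps. -/
lemma grassmannDual :
    Nonempty ({W : Submodule K ((Fin m → K) × (Fin s → K)) //
        finrank K (((Fin m → K) × (Fin s → K)) ⧸ W) = t} ≃
      {W : Submodule K ((Fin m → K) × (Fin s → K)) // finrank K W = t}) := by
  classical
  set e : ((Fin m → K) × (Fin s → K)) ≃ₗ[K] Module.Dual K ((Fin m → K) × (Fin s → K)) :=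
    (Module.finBasis K _).toDualEquiv with he
  have hJ : ∀ W : Submodule K ((Fin m → K) × (Fin s → K)),
      finrank K (W.dualAnnihilator.map e.symm.toLinearMap)
        = finrank K (((Fin m → K) × (Fin s → K)) ⧸ W) := by
    intro W
    rw [LinearEquiv.finrank_map_eq]
    exact (LinearEquiv.finrank_eq (Subspace.quotEquivAnnihilator W)).symm
  have hInj : ∀ W₁ W₂ : Submodule K ((Fin m → K) × (Fin s → K)),
      W₁.dualAnnihilator.map e.symm.toLinearMap = W₂.dualAnnihilator.map e.symm.toLinearMap →
        W₁ = W₂ := by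
    intro W₁ W₂ h
    exact Subspace.dualAnnihilator_inj.mp
      (Submodule.map_injective_of_injective e.symm.injective h)
  have hquot : ∀ W : Submodule K ((Fin m → K) × (Fin s → K)),
      finrank K (((Fin m → K) × (Fin s → K)) ⧸ W) + finrank K W
        = finrank K ((Fin m → K) × (Fin s → K)) :=
    fun W => Submodule.finrank_quotient_add_finrank W
  set Φ : {W : Submodule K ((Fin m → K) × (Fin s → K)) //
        finrank K (((Fin m → K) × (Fin s → K)) ⧸ W) = t} →
      {W : Submodule K ((Fin m → K) × (Fin s → K)) // finrank K W = t} :=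
    fun W => ⟨W.1.dualAnnihilator.map e.symm.toLinearMap, by rw [hJ, W.2]⟩ with hΦ
  set Ψ : {W : Submodule K ((Fin m → K) × (Fin s → K)) // finrank K W = t} →
      {W : Submodule K ((Fin m → K) × (Fin s → K)) //
        finrank K (((Fin m → K) × (Fin s → K)) ⧸ W) = t} :=
    fun W => ⟨W.1.dualAnnihilator.map e.symm.toLinearMap, by
      have h1 := hJ W.1
      have h2 := hquot W.1
      have h3 := hquot (W.1.dualAnnihilator.map e.symm.toLinearMap)
      have h4 : finrank K W.1 ≤ finrank K ((Fin m → K) × (Fin s → K)) :=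
        Submodule.finrank_le W.1
      omega⟩ with hΨ
  have hΦinj : Function.Injective Φ := by
    intro W₁ W₂ h
    exact Subtype.ext (hInj _ _ (congrArg Subtype.val h))
  have hΨinj : Function.Injective Ψ := by
    intro W₁ W₂ h
    exact Subtype.ext (hInj _ _ (congrArg Subtype.val h))
  obtain ⟨h, hbij⟩ := Function.Embedding.schroeder_bernstein hΦinj hΨinj
  exact ⟨Equiv.ofBijective h hbij⟩

/-- Step 4: transporting the Grassmannian along `(Fin m → K) × (Fin s → K) ≃ₗ Fin (m+s) → K`. -/
noncomputable def grassmannTransport :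
    {W : Submodule K ((Fin m → K) × (Fin s → K)) // finrank K W = t} ≃
    {W : Submodule K (Fin (m + s) → K) // finrank K W = t} :=
  letI ℓ : ((Fin m → K) × (Fin s → K)) ≃ₗ[K] (Fin (m + s) → K) :=
    (LinearEquiv.sumArrowLequivProdArrow (Fin m) (Fin s) K K).symm ≪≫ₗ
      (LinearEquiv.funCongrLeft K K finSumFinEquiv).symm
  { toFun := fun W => ⟨W.1.map (ℓ : _ →ₗ[K] _), by
      rw [LinearEquiv.finrank_map_eq]; exact W.2⟩
    invFun := fun W => ⟨W.1.map (ℓ.symm : _ →ₗ[K] _), by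
      rw [LinearEquiv.finrank_map_eq]; exact W.2⟩
    left_inv := fun W => Subtype.ext ((Submodule.map_symm_eq_iff ℓ).mpr rfl)
    right_inv := fun W => Subtype.ext ((Submodule.map_symm_eq_iff ℓ).mp rfl) }

end Stmt4Aux

/-- `Epi(ℤᵐ × (ℤ/p)ˢ, (ℤ/p)ᵗ)/Aut((ℤ/p)ᵗ)` is in bijection with the Grassmannian of
`t`-dimensional `𝔽_p`-subspaces of `𝔽_p^{m+s}`. -/
theorem statement4 (p : ℕ) [Fact p.Prime] (m s t : ℕ) :
    Nonempty (GammaSet ((Fin m → ℤ) × (Fin s → ZMod p)) (Fin t → ZMod p) ≃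
      {W : Submodule (ZMod p) (Fin (m + s) → ZMod p) // Module.finrank (ZMod p) W = t}) := by
  classical
  obtain ⟨e₃⟩ := Stmt4Aux.grassmannDual p m s t
  have hrel : ∀ g₁ g₂, Stmt4Aux.vrel p m s t g₁ g₂ ↔
      GammaRel ((Fin m → ℤ) × (Fin s → ZMod p)) (Fin t → ZMod p)
        (Stmt4Aux.epiEquiv p m s t g₁) (Stmt4Aux.epiEquiv p m s t g₂) := by
    intro g₁ g₂
    constructor
    · rintro ⟨α, hα⟩
      exact ⟨α, fun a => hα _⟩
    · rintro ⟨α, hα⟩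
      refine ⟨α, fun v => ?_⟩
      obtain ⟨a, rfl⟩ := Stmt4Aux.red_surjective p m s v
      exact hα a
  exact ⟨(Quot.congr (Stmt4Aux.epiEquiv p m s t) hrel).symm.trans
    ((Stmt4Aux.gammaToKer p m s t).trans
      (e₃.trans (Stmt4Aux.grassmannTransport p m s t)))⟩
end

section
/- Let G, Q, A be groups and let φ : G → Q and ν : Q → A be surjective group homomorphisms. If the ℚ-vector space (Abelianization(ker ν)) ⊗_ℤ ℚ is infinite-dimensional, then (Abelianization(ker(ν ∘ φ))) ⊗_ℤ ℚ is infinite-dimensional as well. (This expresses that the complement of the Dwyer–Fried set Ω¹_A(Q) maps into the complement of Ω¹_A(G) under composition with φ.) -/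
open scoped TensorProduct

/-- If `φ : G → Q` and `ν : Q → A` are surjective group homomorphisms and the
rationalized abelianization of `ker ν` is infinite-dimensional over `ℚ`, then so is the
rationalized abelianization of `ker (ν ∘ φ)`. -/
theorem statement5 {G Q A : Type*} [Group G] [Group Q] [Group A]
    (φ : G →* Q) (hφ : Function.Surjective φ)
    (ν : Q →* A) (hν : Function.Surjective ν)
    (h : ¬ Module.Finite ℚ (ℚ ⊗[ℤ] Additive (Abelianization ↥ν.ker))) :
    ¬ Module.Finite ℚ (ℚ ⊗[ℤ] Additive (Abelianization ↥(ν.comp φ).ker)) := by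
  intro hfin
  apply h
  -- restriction of φ to kernels
  let ψ : ↥(ν.comp φ).ker →* ↥ν.ker :=
    { toFun := fun x => ⟨φ x, x.2⟩
      map_one' := by ext; simp
      map_mul' := fun x y => by ext; simp }
  have hψ : Function.Surjective ψ := by
    rintro ⟨q, hq⟩
    obtain ⟨g, rfl⟩ := hφ q
    exact ⟨⟨g, hq⟩, rfl⟩
  -- induced surjection on abelianizations
  have hab : Function.Surjective
      (Abelianization.map ψ : Abelianization ↥(ν.comp φ).ker →* Abelianization ↥ν.ker) := by
    intro x
    obtain ⟨y, rfl⟩ := QuotientGroup.mk'_surjective _ x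
    obtain ⟨z, rfl⟩ := hψ y
    exact ⟨Abelianization.of z, rfl⟩
  -- pass to additive and tensor with ℚ
  let f : Additive (Abelianization ↥(ν.comp φ).ker) →+ Additive (Abelianization ↥ν.ker) :=
    MonoidHom.toAdditive (Abelianization.map ψ)
  have hf : Function.Surjective f := hab
  let F := LinearMap.lTensor (R := ℤ) ℚ f.toIntLinearMap
  have hF : Function.Surjective F := LinearMap.lTensor_surjective ℚ hf
  let F' : (ℚ ⊗[ℤ] Additive (Abelianization ↥(ν.comp φ).ker)) →ₗ[ℚ]
      (ℚ ⊗[ℤ] Additive (Abelianization ↥ν.ker)) :=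
    { toFun := F
      map_add' := F.map_add
      map_smul' := fun c x => by
        induction x using TensorProduct.induction_on with
        | zero => simp
        | tmul a b =>
            simp [F, TensorProduct.smul_tmul', LinearMap.lTensor_tmul]
        | add x y hx hy =>
            simp only [smul_add, map_add]
            exact congrArg₂ (· + ·) hx hy }
  exact Module.Finite.of_surjective F' hF
end

section
/- Let H be a finitely generated abelian group with character group Ĥ, and let W ⊆ Ĥ be Zariski closed. Then for every integer d ≥ 1, the set of subgroups Ξ_d(W) is finite. -/
open scoped TensorProduct Pointwise

/-- The character group of an (additively written) abelian group. -/
abbrev CharGp (H : Type*) [AddCommGroup H] : Type _ := Multiplicative H →* ℂˣ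

/-- `V(ξ)`, the set of characters vanishing (i.e. taking value 1) on a subgroup `ξ`. -/
def charV {H : Type*} [AddCommGroup H] (ξ : AddSubgroup H) : Set (CharGp H) :=
  {ρ | ∀ x ∈ ξ, ρ (Multiplicative.ofAdd x) = 1}

/-- The primitive closure of a subgroup of an abelian group. -/
def pclose {H : Type*} [AddCommGroup H] (ξ : AddSubgroup H) : AddSubgroup H where
  carrier := {x | ∃ m : ℕ, 0 < m ∧ m • x ∈ ξ}
  zero_mem' := ⟨1, Nat.one_pos, by simpa using ξ.zero_mem⟩
  add_mem' := by
    rintro a b ⟨m, hm, ha⟩ ⟨k, hk, hb⟩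
    refine ⟨m * k, Nat.mul_pos hm hk, ?_⟩
    rw [smul_add]
    exact ξ.add_mem (by rw [mul_comm, mul_smul]; exact ξ.nsmul_mem ha k)
      (by rw [mul_smul]; exact ξ.nsmul_mem hb m)
  neg_mem' := by
    rintro a ⟨m, hm, ha⟩
    exact ⟨m, hm, by rw [smul_neg]; exact ξ.neg_mem ha⟩

/-- A subgroup is primitive if it equals its primitive closure. -/
def IsPrimitiveSub {H : Type*} [AddCommGroup H] (ξ : AddSubgroup H) : Prop :=
  pclose ξ = ξ

/-- The determinant group `ξ̄/ξ` of a subgroup. -/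
def detGroup {H : Type*} [AddCommGroup H] (ξ : AddSubgroup H) : Type _ :=
  ↥(pclose ξ) ⧸ ξ.addSubgroupOf (pclose ξ)

noncomputable instance {H : Type*} [AddCommGroup H] (ξ : AddSubgroup H) :
    AddCommGroup (detGroup ξ) := by unfold detGroup; infer_instance

/-- The rank of a f.g. abelian group, `dim_ℚ (B ⊗ ℚ)`. -/
noncomputable def rkOf (B : Type*) [AddCommGroup B] : ℕ :=
  Module.finrank ℚ (ℚ ⊗[ℤ] B)

/-- The largest order of an element of `K`. -/
noncomputable def maxOrder (K : Type*) [AddGroup K] : ℕ :=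
  sSup (Set.range fun g : K => addOrderOf g)

/-- The translate `η·V(ξ)` of the "subtorus" `V(ξ)` by the character `η`. -/
def transTorus {H : Type*} [AddCommGroup H] (η : CharGp H) (ξ : AddSubgroup H) :
    Set (CharGp H) :=
  (η * ·) '' charV ξ

/-- `S` is a maximal positive-dimensional torsion-translated subtorus inside `W`. -/
def MaxTransTorusIn {H : Type*} [AddCommGroup H] (S W : Set (CharGp H)) : Prop :=
  S.Infinite ∧ S ⊆ W ∧
    ∀ (χ : AddSubgroup H) (η' : CharGp H), IsPrimitiveSub χ → IsOfFinOrder η' →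
      S ⊆ transTorus η' χ → transTorus η' χ ⊆ W → transTorus η' χ = S

/-- The collection `Ξ_d(W)` of subgroups of `H` attached to a subvariety `W` of the
character group. -/
def Xi {H : Type*} [AddCommGroup H] (d : ℕ) (W : Set (CharGp H)) : Set (AddSubgroup H) :=
  {ξ | IsAddCyclic (detGroup ξ) ∧ Nat.card (detGroup ξ) ∣ d ∧
    ∃ η : CharGp H, IsOfFinOrder η ∧ orderOf η = Nat.card (detGroup ξ) ∧
      (∀ x ∈ ξ, η (Multiplicative.ofAdd x) = 1) ∧
      {x : H | x ∈ pclose ξ ∧ η (Multiplicative.ofAdd x) = 1} = (ξ : Set H) ∧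
      MaxTransTorusIn (transTorus η (pclose ξ)) W}

/-- Evaluation of an element of the group algebra `ℂ[H]` at a character, i.e. the
`ℂ`-algebra homomorphism `ℂ[H] → ℂ` extending the character. -/
noncomputable def evalAt {H : Type*} [AddCommGroup H] (ρ : CharGp H) :
    AddMonoidAlgebra ℂ H →ₐ[ℂ] ℂ :=
  AddMonoidAlgebra.lift ℂ ℂ H ((Units.coeHom ℂ).comp ρ)

/-- `W` is a Zariski closed subset of the character group. -/
def IsZarClosed {H : Type*} [AddCommGroup H] (W : Set (CharGp H)) : Prop :=
  ∃ S : Set (AddMonoidAlgebra ℂ H), W = {ρ | ∀ f ∈ S, evalAt ρ f = 0}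

/-- The support of a module: the set of maximal ideals at which the localization is
nonzero. -/
def suppMax (S M : Type*) [CommRing S] [AddCommGroup M] [Module S M] :
    Set (MaximalSpectrum S) :=
  {m | haveI := m.isMaximal.isPrime; Nontrivial (LocalizedModule m.asIdeal.primeCompl M)}

section Aux1

variable {H : Type*} [AddCommGroup H]

lemma le_pclose (ξ : AddSubgroup H) : ξ ≤ pclose ξ :=
  fun x hx => ⟨1, Nat.one_pos, by simpa using hx⟩

lemma pclose_mono {ξ χ : AddSubgroup H} (h : ξ ≤ χ) : pclose ξ ≤ pclose χ := by
  rintro x ⟨m, hm, hx⟩; exact ⟨m, hm, h hx⟩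

lemma pclose_idem (ξ : AddSubgroup H) : pclose (pclose ξ) = pclose ξ := by
  refine le_antisymm ?_ (le_pclose _)
  rintro x ⟨m, hm, hx⟩
  obtain ⟨k, hk, hkx⟩ := hx
  exact ⟨k * m, Nat.mul_pos hk hm, by rw [← smul_smul]; exact hkx⟩

lemma isPrimitive_pclose (ξ : AddSubgroup H) : IsPrimitiveSub (pclose ξ) := pclose_idem ξ

lemma charV_anti {ξ χ : AddSubgroup H} (h : ξ ≤ χ) : charV χ ⊆ charV ξ :=
  fun ρ hρ x hx => hρ x (h hx)

lemma noZeroSMul_quotient {χ : AddSubgroup H} (h : IsPrimitiveSub χ) :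
    NoZeroSMulDivisors ℤ (H ⧸ χ) := by
  constructor
  intro n q hnq
  by_cases hn : n = 0
  · exact Or.inl hn
  · right
    induction q using QuotientAddGroup.induction_on with
    | H x =>
      have hmem : n • x ∈ χ := by
        have : ((n • x : H) : H ⧸ χ) = 0 := by
          rw [← hnq]
          simp
        exact (QuotientAddGroup.eq_zero_iff _).mp this
      have h2 : (n.natAbs : ℤ) • x ∈ χ := by
        rcases Int.natAbs_eq n with he | he
        · rwa [← he]
        · have : -((n.natAbs : ℤ) • x) ∈ χ := by rwa [← neg_zsmul, ← he]
          simpa using χ.neg_mem this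
      have hx : x ∈ pclose χ := ⟨n.natAbs, Int.natAbs_pos.mpr hn, by
        rwa [← natCast_zsmul] ⟩
      rw [h] at hx
      exact (QuotientAddGroup.eq_zero_iff _).mpr hx

lemma exists_char_ne_one (Q : Type*) [AddCommGroup Q] [AddGroup.FG Q]
    [NoZeroSMulDivisors ℤ Q] {q : Q} (hq : q ≠ 0) :
    ∃ τ : Multiplicative Q →* ℂˣ, τ (Multiplicative.ofAdd q) ≠ 1 := by
  haveI : Module.Finite ℤ Q := Module.Finite.iff_addGroup_fg.mpr ‹_›
  haveI : Module.Free ℤ Q := Module.free_of_finite_type_torsion_free'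
  set b := Module.Free.chooseBasis ℤ Q with hb
  obtain ⟨i, hi⟩ : ∃ i, b.repr q i ≠ 0 := by
    by_contra hc
    push_neg at hc
    apply hq
    have h0 : b.repr q = 0 := Finsupp.ext hc
    have := congrArg b.repr.symm h0
    simpa using this
  let u : ℂˣ := Units.mk0 (2 : ℂ) two_ne_zero
  refine ⟨(zpowersHom ℂˣ u).comp
    (AddMonoidHom.toMultiplicative (b.coord i).toAddMonoidHom), fun hcon => ?_⟩
  have h1 : u ^ (b.coord i q) = 1 := by
    simpa using hcon
  have h2 : (2 : ℂ) ^ (b.coord i q) = 1 := by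
    have := congrArg Units.val h1
    simpa [u] using this
  have h3 : (2 : ℝ) ^ (b.coord i q) = 1 := by
    have : ((2:ℝ) : ℂ) ^ (b.coord i q) = (((1:ℝ)) : ℂ) := by push_cast; simpa using h2
    rw [← Complex.ofReal_zpow] at this
    exact_mod_cast this
  have h4 : b.coord i q = 0 := by
    have hinj := zpow_right_injective₀ (by norm_num : (0:ℝ) < 2) (by norm_num : (2:ℝ) ≠ 1)
    have : (fun m : ℤ => (2:ℝ) ^ m) (b.coord i q) = (fun m : ℤ => (2:ℝ) ^ m) 0 := by
      simpa using h3
    exact hinj this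
  exact hi (by simpa [Module.Basis.coord_apply] using h4)

end Aux1

section Aux2

variable {H : Type*} [AddCommGroup H]

open Classical in
lemma char_sums_eq_zero (Q : Type*) [AddCommGroup Q] [AddGroup.FG Q] [NoZeroSMulDivisors ℤ Q]
    (s : Finset Q) (t : Q → ℂ)
    (h : ∀ τ : Multiplicative Q →* ℂˣ,
      ∑ q ∈ s, t q * (τ (Multiplicative.ofAdd q) : ℂ) = 0) :
    ∀ q ∈ s, t q = 0 := by
  let e : Q → ((Multiplicative Q →* ℂˣ) →* ℂ) := fun q =>
    (Units.coeHom ℂ).comp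
      { toFun := fun τ => τ (Multiplicative.ofAdd q)
        map_one' := rfl
        map_mul' := fun τ₁ τ₂ => rfl }
  have einj : Function.Injective e := by
    intro q₁ q₂ hqe
    by_contra hne
    have hsub : q₁ - q₂ ≠ 0 := sub_ne_zero.mpr hne
    obtain ⟨τ, hτ⟩ := exists_char_ne_one Q hsub
    apply hτ
    have hev : (τ (Multiplicative.ofAdd q₁) : ℂ) = (τ (Multiplicative.ofAdd q₂) : ℂ) := by
      have := congrArg (fun φ : (Multiplicative Q →* ℂˣ) →* ℂ => φ τ) hqe
      simpa [e] using this
    have hevu : τ (Multiplicative.ofAdd q₁) = τ (Multiplicative.ofAdd q₂) := Units.ext hev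
    have : Multiplicative.ofAdd (q₁ - q₂) =
        Multiplicative.ofAdd q₁ * (Multiplicative.ofAdd q₂)⁻¹ := by
      rw [sub_eq_add_neg]; rfl
    rw [this, map_mul, map_inv, hevu, mul_inv_cancel]
  have li : LinearIndependent ℂ (fun q : Q => ((e q : (Multiplicative Q →* ℂˣ) → ℂ))) :=
    (linearIndependent_monoidHom (Multiplicative Q →* ℂˣ) ℂ).comp e einj
  intro q hq
  refine linearIndependent_iff'.mp li s t ?_ q hq
  funext τ
  have := h τ
  simpa [Finset.sum_apply, e, mul_comm] using this

end Aux2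

section Aux3

variable {H : Type*} [AddCommGroup H]

lemma evalAt_eq_sum (ρ : CharGp H) (f : AddMonoidAlgebra ℂ H) :
    evalAt ρ f = ∑ x ∈ f.coeff.support, f.coeff x * (ρ (Multiplicative.ofAdd x) : ℂ) := by
  rw [evalAt, AddMonoidAlgebra.lift_apply, Finsupp.sum]
  refine Finset.sum_congr rfl fun x _ => ?_
  simp [smul_eq_mul]

open Classical in
lemma coset_sums_vanish [AddGroup.FG H] {χ : AddSubgroup H} (hprim : IsPrimitiveSub χ)
    (η : CharGp H) (f : AddMonoidAlgebra ℂ H)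
    (hvan : ∀ σ : CharGp H, σ ∈ charV χ → evalAt (η * σ) f = 0) (x₀ : H) :
    ∑ x ∈ f.coeff.support.filter (fun x => x - x₀ ∈ χ),
      f.coeff x * (η (Multiplicative.ofAdd x) : ℂ) = 0 := by
  haveI := noZeroSMul_quotient hprim
  haveI : AddGroup.FG (H ⧸ χ) :=
    AddGroup.fg_of_surjective (f := QuotientAddGroup.mk' χ) (QuotientAddGroup.mk'_surjective χ)
  set π : H →+ H ⧸ χ := QuotientAddGroup.mk' χ with hπ
  set t : H ⧸ χ → ℂ :=
    fun qq => ∑ x ∈ f.coeff.support.filter (fun x => π x = qq),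
      f.coeff x * (η (Multiplicative.ofAdd x) : ℂ) with ht
  have hfilter : f.coeff.support.filter (fun x => x - x₀ ∈ χ)
      = f.coeff.support.filter (fun x => π x = π x₀) := by
    refine Finset.filter_congr fun x _ => ?_
    constructor
    · intro hmem
      exact (QuotientAddGroup.eq_iff_sub_mem.mpr hmem)
    · intro heq
      exact QuotientAddGroup.eq_iff_sub_mem.mp heq
  rw [hfilter]
  have key : ∀ qq ∈ f.coeff.support.image π, t qq = 0 := by
    apply char_sums_eq_zero
    intro τ
    set σ : CharGp H := τ.comp (AddMonoidHom.toMultiplicative π) with hσdef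
    have hσ : σ ∈ charV χ := by
      intro z hz
      have hz0 : π z = 0 := (QuotientAddGroup.eq_zero_iff z).mpr hz
      show τ (AddMonoidHom.toMultiplicative π (Multiplicative.ofAdd z)) = 1
      have : AddMonoidHom.toMultiplicative π (Multiplicative.ofAdd z)
          = Multiplicative.ofAdd (π z) := rfl
      rw [this, hz0]
      exact map_one τ
    have h0 := hvan σ hσ
    rw [evalAt_eq_sum] at h0
    have hexp : ∀ x : H, ((η * σ) (Multiplicative.ofAdd x) : ℂ)
        = (η (Multiplicative.ofAdd x) : ℂ) * (τ (Multiplicative.ofAdd (π x)) : ℂ) := by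
      intro x
      rfl
    calc ∑ qq ∈ f.coeff.support.image π, t qq * (τ (Multiplicative.ofAdd qq) : ℂ)
        = ∑ qq ∈ f.coeff.support.image π, ∑ x ∈ f.coeff.support.filter (fun x => π x = qq),
            f.coeff x * (η (Multiplicative.ofAdd x) : ℂ) * (τ (Multiplicative.ofAdd (π x)) : ℂ) := by
          refine Finset.sum_congr rfl fun qq _ => ?_
          rw [ht, Finset.sum_mul]
          refine Finset.sum_congr rfl fun x hx => ?_
          rw [(Finset.mem_filter.mp hx).2]
      _ = ∑ x ∈ f.coeff.support,
            f.coeff x * (η (Multiplicative.ofAdd x) : ℂ) * (τ (Multiplicative.ofAdd (π x)) : ℂ) :=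
          Finset.sum_fiberwise_of_maps_to (fun x hx => Finset.mem_image_of_mem π hx) _
      _ = 0 := by
          rw [← h0]
          refine Finset.sum_congr rfl fun x _ => ?_
          rw [hexp x, mul_assoc]
  by_cases hmem : π x₀ ∈ f.coeff.support.image π
  · exact key _ hmem
  · have : f.coeff.support.filter (fun x => π x = π x₀) = ∅ := by
      refine Finset.filter_eq_empty_iff.mpr fun x hx => fun hc => hmem ?_
      rw [← hc]
      exact Finset.mem_image_of_mem π hx
    rw [this, Finset.sum_empty]

end Aux3

section Aux4

variable {H : Type*} [AddCommGroup H]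

open Classical in
lemma evalAt_mul_eq_zero_of_sums {χ : AddSubgroup H} (η σ : CharGp H) (hσ : σ ∈ charV χ)
    (f : AddMonoidAlgebra ℂ H)
    (hvan : ∀ x₀ ∈ f.coeff.support, ∑ x ∈ f.coeff.support.filter (fun x => x - x₀ ∈ χ),
      f.coeff x * (η (Multiplicative.ofAdd x) : ℂ) = 0) :
    evalAt (η * σ) f = 0 := by
  rw [evalAt_eq_sum]
  set π : H →+ H ⧸ χ := QuotientAddGroup.mk' χ with hπ
  rw [← Finset.sum_fiberwise_of_maps_to
    (fun x hx => Finset.mem_image_of_mem π hx)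
    (fun x => f.coeff x * ((η * σ) (Multiplicative.ofAdd x) : ℂ))]
  refine Finset.sum_eq_zero fun qq hqq => ?_
  obtain ⟨x₀, hx₀s, hx₀⟩ := Finset.mem_image.mp hqq
  have hfilter : f.coeff.support.filter (fun x => π x = qq)
      = f.coeff.support.filter (fun x => x - x₀ ∈ χ) := by
    refine Finset.filter_congr fun x _ => ?_
    rw [← hx₀]
    exact ⟨fun heq => QuotientAddGroup.eq_iff_sub_mem.mp heq,
      fun hmem => QuotientAddGroup.eq_iff_sub_mem.mpr hmem⟩
  rw [hfilter]
  have hconst : ∀ x ∈ f.coeff.support.filter (fun x => x - x₀ ∈ χ),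
      (σ (Multiplicative.ofAdd x) : ℂ) = (σ (Multiplicative.ofAdd x₀) : ℂ) := by
    intro x hx
    obtain ⟨_, hxe⟩ := Finset.mem_filter.mp hx
    have hmul : Multiplicative.ofAdd x
        = Multiplicative.ofAdd x₀ * Multiplicative.ofAdd (x - x₀) := by
      show Multiplicative.ofAdd x = Multiplicative.ofAdd (x₀ + (x - x₀))
      rw [add_sub_cancel]
    rw [hmul, map_mul, hσ _ hxe, mul_one]
  calc ∑ x ∈ f.coeff.support.filter (fun x => x - x₀ ∈ χ),
        f.coeff x * ((η * σ) (Multiplicative.ofAdd x) : ℂ)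
      = ∑ x ∈ f.coeff.support.filter (fun x => x - x₀ ∈ χ),
        (f.coeff x * (η (Multiplicative.ofAdd x) : ℂ)) * (σ (Multiplicative.ofAdd x₀) : ℂ) := by
        refine Finset.sum_congr rfl fun x hx => ?_
        have : ((η * σ) (Multiplicative.ofAdd x) : ℂ)
            = (η (Multiplicative.ofAdd x) : ℂ) * (σ (Multiplicative.ofAdd x) : ℂ) := rfl
        rw [this, hconst x hx, mul_assoc]
    _ = (∑ x ∈ f.coeff.support.filter (fun x => x - x₀ ∈ χ),
        f.coeff x * (η (Multiplicative.ofAdd x) : ℂ)) * (σ (Multiplicative.ofAdd x₀) : ℂ) :=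
        (Finset.sum_mul _ _ _).symm
    _ = 0 := by rw [hvan x₀ hx₀s, zero_mul]

end Aux4

section Aux5

variable {H : Type*} [AddCommGroup H]

/-- Separation: a primitive subgroup is cut out by characters vanishing on it. -/
lemma exists_sep_char [AddGroup.FG H] {χ : AddSubgroup H} (hprim : IsPrimitiveSub χ)
    {x : H} (hx : x ∉ χ) :
    ∃ σ : CharGp H, σ ∈ charV χ ∧ σ (Multiplicative.ofAdd x) ≠ 1 := by
  haveI := noZeroSMul_quotient hprim
  haveI : AddGroup.FG (H ⧸ χ) :=
    AddGroup.fg_of_surjective (f := QuotientAddGroup.mk' χ) (QuotientAddGroup.mk'_surjective χ)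
  set π : H →+ H ⧸ χ := QuotientAddGroup.mk' χ with hπ
  have hπx : π x ≠ 0 := fun hc => hx ((QuotientAddGroup.eq_zero_iff x).mp hc)
  obtain ⟨τ, hτ⟩ := exists_char_ne_one (H ⧸ χ) hπx
  refine ⟨τ.comp (AddMonoidHom.toMultiplicative π), fun z hz => ?_, hτ⟩
  have hz0 : π z = 0 := (QuotientAddGroup.eq_zero_iff z).mpr hz
  show τ (Multiplicative.ofAdd (π z)) = 1
  rw [hz0]
  exact map_one τ

/-- If two subgroups, the smaller one primitive, have equal character kernels
then they agree. -/
lemma eq_of_charV_eq [AddGroup.FG H] {χ χ' : AddSubgroup H} (hle : χ ≤ χ')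
    (hprim : IsPrimitiveSub χ) (h : charV χ ⊆ charV χ') : χ = χ' := by
  refine le_antisymm hle fun x hx => ?_
  by_contra hxn
  obtain ⟨σ, hσ, hσx⟩ := exists_sep_char hprim hxn
  exact hσx (h hσ x hx)
end Aux5

section Aux6

variable {H : Type*} [AddCommGroup H]

/-- The set of differences of support elements of a finite family of group algebra
elements. -/
def diffSet (F : Finset (AddMonoidAlgebra ℂ H)) : Set H :=
  ⋃ f ∈ F, (fun p : H × H => p.1 - p.2) '' ((f.coeff.support : Set H) ×ˢ (f.coeff.support : Set H))

lemma diffSet_finite (F : Finset (AddMonoidAlgebra ℂ H)) : (diffSet F).Finite :=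
  Set.Finite.biUnion F.finite_toSet fun f _ =>
    Set.Finite.image _ (Set.Finite.prod f.coeff.support.finite_toSet f.coeff.support.finite_toSet)

open Classical in
lemma pclose_eq_of_mem_Xi [AddGroup.FG H] (F : Finset (AddMonoidAlgebra ℂ H)) (d : ℕ)
    {ξ : AddSubgroup H}
    (hξ : ξ ∈ Xi d {ρ : CharGp H | ∀ f ∈ F, evalAt ρ f = 0}) :
    pclose ξ = pclose (AddSubgroup.closure (diffSet F ∩ ((pclose ξ : AddSubgroup H) : Set H))) := by
  obtain ⟨-, -, η, hηfin, -, -, -, hmax⟩ := hξ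
  obtain ⟨hinf, hsubW, hmaxi⟩ := hmax
  set χ' : AddSubgroup H := pclose ξ with hχ'
  set χ : AddSubgroup H := pclose (AddSubgroup.closure (diffSet F ∩ (χ' : Set H))) with hχ
  have hprim' : IsPrimitiveSub χ' := isPrimitive_pclose ξ
  have hprim : IsPrimitiveSub χ := isPrimitive_pclose _
  have hle : χ ≤ χ' := by
    rw [hχ]
    have h1 : AddSubgroup.closure (diffSet F ∩ (χ' : Set H)) ≤ χ' :=
      (AddSubgroup.closure_le _).mpr Set.inter_subset_right
    calc pclose (AddSubgroup.closure (diffSet F ∩ (χ' : Set H)))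
        ≤ pclose χ' := pclose_mono h1
      _ = χ' := hprim'
  have hsums : ∀ f ∈ F, ∀ x₀ : H,
      ∑ x ∈ f.coeff.support.filter (fun x => x - x₀ ∈ χ'),
        f.coeff x * (η (Multiplicative.ofAdd x) : ℂ) = 0 := by
    intro f hf x₀
    refine coset_sums_vanish hprim' η f (fun σ hσ => ?_) x₀
    exact hsubW ⟨σ, hσ, rfl⟩ f hf
  have hWsub : transTorus η χ ⊆ {ρ : CharGp H | ∀ f ∈ F, evalAt ρ f = 0} := by
    rintro _ ⟨σ, hσ, rfl⟩ f hf
    refine evalAt_mul_eq_zero_of_sums η σ hσ f (fun x₀ hx₀ => ?_)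
    have hfeq : f.coeff.support.filter (fun x => x - x₀ ∈ χ)
        = f.coeff.support.filter (fun x => x - x₀ ∈ χ') := by
      refine Finset.filter_congr fun x hx => ?_
      constructor
      · intro hmem; exact hle hmem
      · intro hmem
        have hdiff : x - x₀ ∈ diffSet F := by
          refine Set.mem_biUnion hf ?_
          exact ⟨(x, x₀), ⟨Finset.mem_coe.mpr hx, Finset.mem_coe.mpr hx₀⟩, rfl⟩
        have hcl : x - x₀ ∈ AddSubgroup.closure (diffSet F ∩ (χ' : Set H)) :=
          AddSubgroup.subset_closure ⟨hdiff, hmem⟩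
        exact le_pclose _ hcl
    rw [hfeq]
    exact hsums f hf x₀
  have hST : transTorus η χ' ⊆ transTorus η χ :=
    Set.image_mono (charV_anti hle)
  have heq := hmaxi χ η hprim hηfin hST hWsub
  have hVeq : charV χ ⊆ charV χ' := by
    intro σ hσ
    have hm : (η * σ) ∈ transTorus η χ' := by
      rw [← heq]; exact ⟨σ, hσ, rfl⟩
    obtain ⟨σ', hσ', hmul⟩ := hm
    have hss : σ' = σ := by
      ext x
      have h2 := congrArg (fun t : CharGp H => t x) hmul
      simp only [MonoidHom.mul_apply] at h2
      exact congrArg Units.val (mul_left_cancel h2)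
    rwa [← hss]
  exact (eq_of_charV_eq hle hprim hVeq).symm

end Aux6

section Aux7

variable {H : Type*} [AddCommGroup H]

lemma exists_finset_zar [AddGroup.FG H] {W : Set (CharGp H)} (hW : IsZarClosed W) :
    ∃ F : Finset (AddMonoidAlgebra ℂ H), W = {ρ | ∀ f ∈ F, evalAt ρ f = 0} := by
  obtain ⟨S, rfl⟩ := hW
  haveI : AddMonoid.FG H := AddGroup.fg_iff_addMonoid_fg.mp ‹_›
  haveI : IsNoetherianRing (AddMonoidAlgebra ℂ H) := Algebra.FiniteType.isNoetherianRing ℂ _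
  have hfg : (Ideal.span S).FG := IsNoetherian.noetherian _
  obtain ⟨F, hF⟩ := hfg
  refine ⟨F, Set.ext fun ρ => ?_⟩
  constructor
  · intro hρ f hf
    have hker : Ideal.span S ≤ RingHom.ker (evalAt ρ : AddMonoidAlgebra ℂ H →+* ℂ) :=
      Ideal.span_le.mpr fun s hs => RingHom.mem_ker.mpr (hρ s hs)
    have hfm : f ∈ Ideal.span S := by rw [← hF]; exact Ideal.subset_span hf
    exact RingHom.mem_ker.mp (hker hfm)
  · intro hρ s hs
    have hker : Ideal.span (↑F : Set (AddMonoidAlgebra ℂ H))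
        ≤ RingHom.ker (evalAt ρ : AddMonoidAlgebra ℂ H →+* ℂ) :=
      Ideal.span_le.mpr fun f hf => RingHom.mem_ker.mpr (hρ f hf)
    have hsm : s ∈ Ideal.span (↑F : Set (AddMonoidAlgebra ℂ H)) := by
      rw [hF]; exact Ideal.subset_span hs
    exact RingHom.mem_ker.mp (hker hsm)

lemma nsmul_mem_of_detcard {ξ : AddSubgroup H} {d : ℕ} (hd : 1 ≤ d)
    (hdvd : Nat.card (detGroup ξ) ∣ d) {x : H} (hx : x ∈ pclose ξ) : d • x ∈ ξ := by
  set Q := ↥(pclose ξ) ⧸ ξ.addSubgroupOf (pclose ξ) with hQ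
  have hcard : Nat.card (detGroup ξ) = Nat.card Q := rfl
  rw [hcard] at hdvd
  set k := Nat.card Q with hk
  have hk0 : k ≠ 0 := by
    rintro h
    rw [h] at hdvd
    have := Nat.eq_zero_of_zero_dvd hdvd
    omega
  haveI : Finite Q := (Nat.card_ne_zero.mp hk0).2
  set g : Q := QuotientAddGroup.mk (⟨x, hx⟩ : ↥(pclose ξ)) with hg
  have hkg : k • g = 0 := card_nsmul_eq_zero'
  have hmem : k • (⟨x, hx⟩ : ↥(pclose ξ)) ∈ ξ.addSubgroupOf (pclose ξ) := by
    rw [← QuotientAddGroup.eq_zero_iff]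
    have : ((k • (⟨x, hx⟩ : ↥(pclose ξ)) : ↥(pclose ξ)) : Q)
        = k • ((⟨x, hx⟩ : ↥(pclose ξ)) : Q) := by
      exact map_nsmul (QuotientAddGroup.mk' (ξ.addSubgroupOf (pclose ξ))) _ _
    rw [this]
    exact hkg
  have hkx : k • x ∈ ξ := by
    simpa [AddSubgroup.mem_addSubgroupOf] using hmem
  obtain ⟨m, rfl⟩ := hdvd
  rw [mul_comm, mul_smul]
  exact ξ.nsmul_mem hkx m

open Classical in
lemma fiber_finite [AddGroup.FG H] {d : ℕ} (hd : 1 ≤ d) (χ : AddSubgroup H) :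
    {ξ : AddSubgroup H | pclose ξ = χ ∧ Nat.card (detGroup ξ) ∣ d}.Finite := by
  haveI : Module.Finite ℤ H := Module.Finite.iff_addGroup_fg.mpr ‹_›
  haveI hfgχ : AddGroup.FG ↥χ := by
    have h1 : χ.toIntSubmodule.FG := IsNoetherian.noetherian _
    have h2 : Module.Finite ℤ ↥χ.toIntSubmodule := Module.Finite.iff_fg.mpr h1
    exact Module.Finite.iff_addGroup_fg.mp h2
  set D : AddSubgroup ↥χ := AddSubgroup.closure (Set.range fun y : ↥χ => d • y) with hD
  haveI : AddGroup.FG (↥χ ⧸ D) :=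
    AddGroup.fg_of_surjective (f := QuotientAddGroup.mk' D) (QuotientAddGroup.mk'_surjective D)
  haveI : Finite (↥χ ⧸ D) := by
    apply AddCommGroup.finite_of_fg_torsion
    intro g
    induction g using QuotientAddGroup.induction_on with
    | H y =>
      refine isOfFinAddOrder_iff_nsmul_eq_zero.mpr ⟨d, by omega, ?_⟩
      have h1 : (d • (y : ↥χ) : ↥χ) ∈ D := AddSubgroup.subset_closure ⟨y, rfl⟩
      have h2 : ((d • (y : ↥χ) : ↥χ) : ↥χ ⧸ D) = d • ((y : ↥χ) : ↥χ ⧸ D) :=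
        map_nsmul (QuotientAddGroup.mk' D) _ _
      rw [← h2]
      exact (QuotientAddGroup.eq_zero_iff _).mpr h1
  set Φ : AddSubgroup H → Set (↥χ ⧸ D) :=
    fun ξ => {k | ∃ y : ↥χ, (y : H) ∈ ξ ∧ (y : ↥χ ⧸ D) = k} with hΦ
  have hsub : ∀ ξ₁ ξ₂ : AddSubgroup H,
      (pclose ξ₁ = χ ∧ Nat.card (detGroup ξ₁) ∣ d) →
      (pclose ξ₂ = χ ∧ Nat.card (detGroup ξ₂) ∣ d) → Φ ξ₁ = Φ ξ₂ → ξ₁ ≤ ξ₂ := by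
    intro ξ₁ ξ₂ h₁ h₂ hΦeq x hx
    have hxχ : x ∈ χ := h₁.1 ▸ le_pclose ξ₁ hx
    have hmem1 : ((⟨x, hxχ⟩ : ↥χ) : ↥χ ⧸ D) ∈ Φ ξ₁ := ⟨⟨x, hxχ⟩, hx, rfl⟩
    rw [hΦeq] at hmem1
    obtain ⟨z, hz₂, hzk⟩ := hmem1
    have hdle : D ≤ ξ₂.addSubgroupOf χ := by
      rw [hD]
      refine (AddSubgroup.closure_le _).mpr ?_
      rintro _ ⟨y, rfl⟩
      have : d • (y : H) ∈ ξ₂ := nsmul_mem_of_detcard hd h₂.2 (h₂.1.symm ▸ y.2)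
      simpa [AddSubgroup.mem_addSubgroupOf] using this
    have hdiff : z - (⟨x, hxχ⟩ : ↥χ) ∈ D := QuotientAddGroup.eq_iff_sub_mem.mp hzk
    have hdiff2 : (z : H) - x ∈ ξ₂ := by
      have := hdle hdiff
      simpa [AddSubgroup.mem_addSubgroupOf] using this
    have hfin : (z : H) - ((z : H) - x) ∈ ξ₂ := ξ₂.sub_mem hz₂ hdiff2
    simpa using hfin
  have hinj : Set.InjOn Φ {ξ : AddSubgroup H | pclose ξ = χ ∧ Nat.card (detGroup ξ) ∣ d} := by
    intro ξ₁ h₁ ξ₂ h₂ hΦeq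
    exact le_antisymm (hsub ξ₁ ξ₂ h₁ h₂ hΦeq) (hsub ξ₂ ξ₁ h₂ h₁ hΦeq.symm)
  exact Set.Finite.of_finite_image (Set.toFinite _) hinj

end Aux7

/-- For a Zariski closed subset `W` of the character group of a finitely generated
abelian group, and every `d ≥ 1`, the collection `Ξ_d(W)` is finite. -/
theorem statement8 {H : Type*} [AddCommGroup H] [AddGroup.FG H]
    (W : Set (CharGp H)) (hW : IsZarClosed W) (d : ℕ) (hd : 1 ≤ d) :
    (Xi d W).Finite := by
  obtain ⟨F, rfl⟩ := exists_finset_zar hW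
  have himgfin : ((fun s : Set H => pclose (AddSubgroup.closure s)) ''
      {s : Set H | s ⊆ diffSet F}).Finite :=
    Set.Finite.image _ (Set.Finite.finite_subsets (diffSet_finite F))
  refine Set.Finite.subset (Set.Finite.biUnion himgfin fun χ _ => fiber_finite hd χ) ?_
  intro ξ hξ
  have hkey := pclose_eq_of_mem_Xi F d hξ
  refine Set.mem_biUnion (x := pclose (AddSubgroup.closure
      (diffSet F ∩ ((pclose ξ : AddSubgroup H) : Set H)))) ?_ ?_
  · exact ⟨diffSet F ∩ ((pclose ξ : AddSubgroup H) : Set H), Set.inter_subset_left, rfl⟩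
  · exact ⟨hkey, hξ.2.1⟩
end

section
/- Let H be a finitely generated abelian group of rank n and let 1 ≤ r ≤ n. The map sending the class [ν] of a surjective homomorphism ν : H → ℤʳ to the subspace P_ν = {f ∈ Hom(H, ℚ) : f(x) = 0 for all x ∈ ker ν} is a well-defined bijection from Γ(H, ℤʳ) = Epi(H, ℤʳ)/Aut(ℤʳ) onto the set of r-dimensional ℚ-linear subspaces of the ℚ-vector space Hom(H, ℚ). Moreover, for any subgroup ξ ≤ H, one has rank(ker ν + ξ) < rank H if and only if P_ν ∩ {f ∈ Hom(H, ℚ) : f(ξ) = 0} ≠ {0}. (Thus the set σ_{ℤʳ}(ξ) corresponds to the special Schubert variety of r-planes meeting the subspace (H/ξ)^∨ ⊗ ℚ nontrivially.) -/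
open scoped TensorProduct

/-- The annihilator of a subgroup `ξ ≤ H` inside `Hom(H, ℚ)`, a `ℚ`-subspace. -/
def annSub {H : Type*} [AddCommGroup H] (ξ : AddSubgroup H) :
    Submodule ℚ (H →ₗ[ℤ] ℚ) where
  carrier := {f | ∀ x ∈ ξ, f x = 0}
  add_mem' := by
    intro f g hf hg x hx
    simp [LinearMap.add_apply, hf x hx, hg x hx]
  zero_mem' := by intro x hx; simp
  smul_mem' := by
    intro c f hf x hx
    simp [LinearMap.smul_apply, hf x hx]

namespace S9Aux

instance flatQ : Module.Flat ℤ ℚ := IsLocalization.flat ℚ (nonZeroDivisors ℤ)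

variable {H : Type*} [AddCommGroup H]

/-- The canonical map `H → ℚ ⊗ H`. -/
noncomputable def iota (H : Type*) [AddCommGroup H] : H →ₗ[ℤ] ℚ ⊗[ℤ] H :=
  TensorProduct.mk ℤ ℚ H 1

/-- Duality between `Hom(H,ℚ)` and the dual of `ℚ ⊗ H`. -/
noncomputable def dEquiv (H : Type*) [AddCommGroup H] :
    (H →ₗ[ℤ] ℚ) ≃ₗ[ℚ] Module.Dual ℚ (ℚ ⊗[ℤ] H) :=
  LinearMap.liftBaseChangeEquiv ℚ

@[simp] lemma dEquiv_tmul (f : H →ₗ[ℤ] ℚ) (a : ℚ) (x : H) :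
    dEquiv H f (a ⊗ₜ x) = a • f x := rfl

/-- The `ℚ`-span of the image of a subgroup in `ℚ ⊗ H`. -/
noncomputable def spanOf (S : AddSubgroup H) : Submodule ℚ (ℚ ⊗[ℤ] H) :=
  Submodule.span ℚ (iota H '' S)

lemma mem_ann_iff (S : AddSubgroup H) (f : H →ₗ[ℤ] ℚ) :
    f ∈ annSub S ↔ dEquiv H f ∈ (spanOf S).dualAnnihilator := by
  rw [Submodule.mem_dualAnnihilator]
  constructor
  · intro hf w hw
    have hle : spanOf S ≤ LinearMap.ker (dEquiv H f) := by
      rw [spanOf, Submodule.span_le]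
      rintro _ ⟨x, hx, rfl⟩
      show dEquiv H f ((1:ℚ) ⊗ₜ x) = 0
      rw [dEquiv_tmul, hf x hx, smul_zero]
    simpa using hle hw
  · intro hf x hx
    have := hf (iota H x) (Submodule.subset_span ⟨x, hx, rfl⟩)
    rw [show iota H x = (1:ℚ) ⊗ₜ x from rfl, dEquiv_tmul, one_smul] at this
    exact this

lemma ann_eq_comap (S : AddSubgroup H) :
    annSub S = Submodule.comap (dEquiv H).toLinearMap (spanOf S).dualAnnihilator := by
  ext f; simpa using mem_ann_iff S f

noncomputable def annEquiv (S : AddSubgroup H) :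
    annSub S ≃ₗ[ℚ] (spanOf S).dualAnnihilator := by
  rw [ann_eq_comap]
  exact LinearEquiv.ofSubmodule' (dEquiv H) _

/-- inclusion of a subgroup, as a `ℤ`-linear map -/
def incl (S : AddSubgroup H) : S →ₗ[ℤ] H := S.subtype.toIntLinearMap

lemma range_baseChange_incl (S : AddSubgroup H) :
    LinearMap.range ((incl S).baseChange ℚ) = spanOf S := by
  apply le_antisymm
  · rintro _ ⟨z, rfl⟩
    induction z using TensorProduct.induction_on with
    | zero => simp
    | tmul a y =>
        have h0 : (incl S).baseChange ℚ (a ⊗ₜ y) = a ⊗ₜ (y : H) := rfl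
        rw [h0]
        have h1 : iota H (y : H) ∈ spanOf S := Submodule.subset_span ⟨y, y.2, rfl⟩
        have h2 : a ⊗ₜ (y : H) = a • iota H (y : H) := by
          show a ⊗ₜ (y:H) = a • ((1:ℚ) ⊗ₜ (y:H))
          rw [TensorProduct.smul_tmul', smul_eq_mul, mul_one]
        rw [h2]
        exact Submodule.smul_mem _ _ h1
    | add u v hu hv => rw [map_add]; exact Submodule.add_mem _ hu hv
  · rw [spanOf, Submodule.span_le]
    rintro _ ⟨x, hx, rfl⟩
    exact ⟨(1 : ℚ) ⊗ₜ ⟨x, hx⟩, rfl⟩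

lemma rk_eq_finrank_spanOf (S : AddSubgroup H) :
    Module.finrank ℚ (ℚ ⊗[ℤ] S) = Module.finrank ℚ (spanOf S) := by
  have hinj : Function.Injective ((incl S).baseChange ℚ) := by
    rw [LinearMap.baseChange_eq_ltensor]
    exact Module.Flat.lTensor_preserves_injective_linearMap (incl S)
      Subtype.val_injective
  rw [← range_baseChange_incl]
  exact (LinearEquiv.ofInjective _ hinj).finrank_eq

/-- key exactness: the kernel of the base-changed map is the span of the kernel -/
lemma ker_baseChange (r : ℕ) (ν : H →+ (Fin r → ℤ)) (hν : Function.Surjective ν) :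
    LinearMap.ker (ν.toIntLinearMap.baseChange ℚ) = spanOf ν.ker := by
  have hex : Function.Exact (incl ν.ker) ν.toIntLinearMap := by
    intro x
    constructor
    · intro hx
      exact ⟨⟨x, hx⟩, rfl⟩
    · rintro ⟨y, rfl⟩
      exact y.2
  have hexQ := lTensor_exact (f := incl ν.ker) (g := ν.toIntLinearMap) ℚ hex hν
  ext z
  have h1 : (ν.toIntLinearMap.baseChange ℚ) z =
      (LinearMap.lTensor ℚ ν.toIntLinearMap) z := by
    rw [← LinearMap.baseChange_eq_ltensor]
  rw [LinearMap.mem_ker, h1, hexQ z, ← range_baseChange_incl]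
  constructor
  · rintro ⟨y, rfl⟩
    refine ⟨y, ?_⟩
    rw [LinearMap.baseChange_eq_ltensor]
  · rintro ⟨y, rfl⟩
    refine ⟨y, ?_⟩
    rw [← LinearMap.baseChange_eq_ltensor]

lemma spanOf_ker_finrank [Module.Finite ℤ H] (r : ℕ) (ν : H →+ (Fin r → ℤ))
    (hν : Function.Surjective ν) :
    Module.finrank ℚ (spanOf ν.ker) + r = Module.finrank ℚ (ℚ ⊗[ℤ] H) := by
  have hsurj : Function.Surjective (ν.toIntLinearMap.baseChange ℚ) := by
    rw [LinearMap.baseChange_eq_ltensor]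
    exact LinearMap.lTensor_surjective ℚ hν
  have h1 := LinearMap.finrank_range_add_finrank_ker (ν.toIntLinearMap.baseChange ℚ)
  rw [LinearMap.range_eq_top.mpr hsurj, ker_baseChange r ν hν] at h1
  have h2 : Module.finrank ℚ (⊤ : Submodule ℚ (ℚ ⊗[ℤ] (Fin r → ℤ))) = r := by
    rw [finrank_top, Module.finrank_baseChange]
    simp
  omega

section fin
variable [Module.Finite ℤ H]

instance homFin : FiniteDimensional ℚ (H →ₗ[ℤ] ℚ) :=
  Module.Finite.equiv (dEquiv H).symm

lemma ann_finrank (S : AddSubgroup H) :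
    Module.finrank ℚ (annSub S) + Module.finrank ℚ (spanOf S) =
      Module.finrank ℚ (ℚ ⊗[ℤ] H) := by
  rw [(annEquiv S).finrank_eq]
  rw [← LinearEquiv.finrank_eq (Subspace.quotEquivAnnihilator (spanOf S))]
  exact Submodule.finrank_quotient_add_finrank _

lemma rk_lt_iff_ann_ne_bot (S : AddSubgroup H) :
    Module.finrank ℚ (ℚ ⊗[ℤ] S) < Module.finrank ℚ (ℚ ⊗[ℤ] H) ↔ annSub S ≠ ⊥ := by
  rw [rk_eq_finrank_spanOf]
  have h1 := ann_finrank S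
  have h2 : annSub S = ⊥ ↔ Module.finrank ℚ (annSub S) = 0 :=
    (Submodule.finrank_eq_zero (R := ℚ)).symm
  constructor
  · intro h hbot
    rw [h2] at hbot
    omega
  · intro h
    have : Module.finrank ℚ (annSub S) ≠ 0 := fun h0 => h (h2.mpr h0)
    omega

lemma ann_ker_finrank (r : ℕ) (ν : H →+ (Fin r → ℤ)) (hν : Function.Surjective ν) :
    Module.finrank ℚ (annSub ν.ker) = r := by
  have h1 := ann_finrank ν.ker
  have h2 := spanOf_ker_finrank r ν hν
  omega

end fin

lemma ann_sup (K ξ : AddSubgroup H) : annSub (K ⊔ ξ) = annSub K ⊓ annSub ξ := by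
  ext f
  constructor
  · intro hf
    exact ⟨fun x hx => hf x (AddSubgroup.mem_sup_left hx),
           fun x hx => hf x (AddSubgroup.mem_sup_right hx)⟩
  · rintro ⟨h1, h2⟩ x hx
    have hle : K ⊔ ξ ≤ f.toAddMonoidHom.ker := by
      refine sup_le (fun y hy => ?_) (fun y hy => ?_)
      · exact AddMonoidHom.mem_ker.mpr (h1 y hy)
      · exact AddMonoidHom.mem_ker.mpr (h2 y hy)
    exact AddMonoidHom.mem_ker.mp (hle hx)

/-- kernel recovery from annihilator -/
lemma ker_recover (r : ℕ) (ν : H →+ (Fin r → ℤ)) (x : H) :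
    x ∈ ν.ker ↔ ∀ f ∈ annSub ν.ker, f x = 0 := by
  constructor
  · intro hx f hf
    exact hf x hx
  · intro hx
    rw [AddMonoidHom.mem_ker]
    funext i
    set f : H →ₗ[ℤ] ℚ :=
      (Int.castAddHom ℚ).toIntLinearMap ∘ₗ (LinearMap.proj i) ∘ₗ ν.toIntLinearMap with hfdef
    have hf : f ∈ annSub ν.ker := by
      intro y hy
      have : ν y = 0 := hy
      simp [hfdef, LinearMap.comp_apply, this]
    have h1 := hx f hf
    simp only [hfdef, LinearMap.comp_apply] at h1
    have h2 : ((ν x i : ℤ) : ℚ) = 0 := h1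
    exact_mod_cast h2

/-- construct the automorphism witnessing `GammaRel` from equal kernels -/
lemma gammaRel_of_ker_eq (r : ℕ) (ν₁ ν₂ : H →+ (Fin r → ℤ))
    (h₁ : Function.Surjective ν₁) (h₂ : Function.Surjective ν₂)
    (h : ν₁.ker = ν₂.ker) :
    ∃ α : (Fin r → ℤ) ≃+ (Fin r → ℤ), ∀ g : H, α (ν₁ g) = ν₂ g := by
  let e₁ := QuotientAddGroup.quotientKerEquivOfSurjective ν₁ h₁
  let e₂ := QuotientAddGroup.quotientKerEquivOfSurjective ν₂ h₂
  let q := QuotientAddGroup.quotientAddEquivOfEq h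
  refine ⟨e₁.symm.trans (q.trans e₂), fun g => ?_⟩
  have he1 : e₁ (QuotientAddGroup.mk g) = ν₁ g := QuotientAddGroup.kerLift_mk ν₁ g
  have he2 : e₂ (QuotientAddGroup.mk g) = ν₂ g := QuotientAddGroup.kerLift_mk ν₂ g
  have h1 : e₁.symm (ν₁ g) = QuotientAddGroup.mk g := by
    apply e₁.injective
    rw [AddEquiv.apply_symm_apply, he1]
  simp only [AddEquiv.trans_apply, h1]
  rw [QuotientAddGroup.quotientAddEquivOfEq_mk h, he2]

/-- given an `r`-dimensional subspace of `Hom(H,ℚ)`, produce a surjection onto `ℤʳ`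
whose kernel has the given annihilator -/
lemma exists_epi [Module.Finite ℤ H] (r : ℕ) (W : Submodule ℚ (H →ₗ[ℤ] ℚ))
    (hW : Module.finrank ℚ W = r) :
    ∃ ν : H →+ (Fin r → ℤ), Function.Surjective ν ∧ annSub ν.ker = W := by
  classical
  let b : Module.Basis (Fin r) ℚ W := Module.finBasisOfFinrankEq ℚ W hW
  let g : Fin r → (H →ₗ[ℤ] ℚ) := fun i => (b i : H →ₗ[ℤ] ℚ)
  have hind : LinearIndependent ℚ g := b.linearIndependent.map' W.subtype W.ker_subtype
  have hgW : Submodule.span ℚ (Set.range g) = W := by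
    have h1 : Set.range g = W.subtype '' Set.range b := by
      rw [← Set.range_comp]; rfl
    rw [h1, ← Submodule.map_span, b.span_eq, Submodule.map_top, Submodule.range_subtype]
  let F : H →ₗ[ℤ] (Fin r → ℚ) := LinearMap.pi g
  let L : Submodule ℤ (Fin r → ℚ) := LinearMap.range F
  have hLspan : Submodule.span ℚ (L : Set (Fin r → ℚ)) = ⊤ := by
    rw [← Subspace.dualAnnihilator_inj, Submodule.dualAnnihilator_top]
    rw [Submodule.eq_bot_iff]
    intro φ hφ
    rw [Submodule.mem_dualAnnihilator] at hφ
    set c : Fin r → ℚ := fun i => φ ((Pi.single i 1 : Fin r → ℚ)) with hc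
    have hphi : ∀ y : Fin r → ℚ, φ y = ∑ i, y i * c i := by
      intro y
      have hy : y = ∑ i, y i • (Pi.single i 1 : Fin r → ℚ) := by
        ext j
        simp [Finset.sum_apply, Pi.single_apply]
      conv_lhs => rw [hy]
      rw [map_sum]
      simp [smul_eq_mul]
      rfl
    have hzero : ∑ i, c i • g i = 0 := by
      apply LinearMap.ext
      intro x
      have hFx : φ (F x) = 0 := hφ (F x) (Submodule.subset_span ⟨x, rfl⟩)
      rw [hphi (F x)] at hFx
      simp only [LinearMap.sum_apply, LinearMap.smul_apply, LinearMap.zero_apply,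
        smul_eq_mul]
      rw [← hFx]
      refine Finset.sum_congr rfl fun i _ => ?_
      have : F x i = g i x := rfl
      rw [this, mul_comm]
    have hc0 : ∀ i, c i = 0 := Fintype.linearIndependent_iff.mp hind c hzero
    apply (Pi.basisFun ℚ (Fin r)).ext
    intro i
    simpa [Pi.basisFun_apply] using hc0 i
  haveI : Module.Finite ℤ L := Module.Finite.range F
  haveI : Module.IsTorsionFree ℤ ↥L := inferInstance
  haveI : Module.Free ℤ ↥L := Module.free_of_finite_type_torsion_free'
  have hfinL : Module.finrank ℤ L = r := by
    set m := Module.finrank ℤ L with hm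
    let bz : Module.Basis (Fin m) ℤ L := Module.finBasis ℤ L
    let v : Fin m → (Fin r → ℚ) := fun i => (bz i : Fin r → ℚ)
    have hvZ : LinearIndependent ℤ v := bz.linearIndependent.map' L.subtype L.ker_subtype
    have hv : LinearIndependent ℚ v := hvZ.localization ℚ (nonZeroDivisors ℤ)
    have hvspan : ⊤ ≤ Submodule.span ℚ (Set.range v) := by
      rw [← hLspan]
      apply Submodule.span_le.mpr
      intro x hx
      have h1 : Set.range v = L.subtype '' Set.range bz := by
        rw [← Set.range_comp]; rfl
      have h2 : x ∈ Submodule.span ℤ (Set.range v) := by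
        rw [h1, ← Submodule.map_span, bz.span_eq, Submodule.map_top, Submodule.range_subtype]
        exact hx
      exact Submodule.span_le_restrictScalars ℤ ℚ (Set.range v) h2
    let bq : Module.Basis (Fin m) ℚ (Fin r → ℚ) := Module.Basis.mk hv hvspan
    have := Module.finrank_eq_card_basis bq
    simpa using this.symm
  let cz : Module.Basis (Fin r) ℤ L := Module.finBasisOfFinrankEq ℤ L hfinL
  let eL : L ≃ₗ[ℤ] (Fin r → ℤ) := cz.equivFun
  let νlin : H →ₗ[ℤ] (Fin r → ℤ) := eL.toLinearMap ∘ₗ F.rangeRestrict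
  refine ⟨νlin.toAddMonoidHom, ?_, ?_⟩
  · exact eL.surjective.comp F.surjective_rangeRestrict
  · have hker : ∀ x : H, x ∈ νlin.toAddMonoidHom.ker ↔ F x = 0 := by
      intro x
      rw [AddMonoidHom.mem_ker]
      have h0 : νlin.toAddMonoidHom x = eL (F.rangeRestrict x) := rfl
      rw [h0, EmbeddingLike.map_eq_zero_iff]
      constructor
      · intro h
        have := congrArg Subtype.val h
        simpa using this
      · intro h
        exact Subtype.ext (by simpa using h)
    have hle : W ≤ annSub νlin.toAddMonoidHom.ker := by
      rw [← hgW]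
      apply Submodule.span_le.mpr
      rintro _ ⟨i, rfl⟩
      intro x hx
      have hFx : F x = 0 := (hker x).mp hx
      have h3 : F x i = g i x := rfl
      rw [← h3, hFx]; rfl
    have hfr : Module.finrank ℚ (annSub νlin.toAddMonoidHom.ker) = r :=
      ann_ker_finrank r νlin.toAddMonoidHom (eL.surjective.comp F.surjective_rangeRestrict)
    exact (Submodule.eq_of_le_of_finrank_le hle (by rw [hfr, hW])).symm

end S9Aux

/-- `Γ(H, ℤʳ)` is the Grassmannian of `r`-planes in `Hom(H,ℚ)`, via `[ν] ↦ P_ν`;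
moreover `rank(ker ν + ξ) < rank H` iff `P_ν` meets the annihilator of `ξ` nontrivially. -/
theorem statement9 {H : Type*} [AddCommGroup H] [AddGroup.FG H] (n r : ℕ)
    (hn : rkOf H = n) (hr1 : 1 ≤ r) (hrn : r ≤ n) :
    (∃ Φ : GammaSet H (Fin r → ℤ) → Submodule ℚ (H →ₗ[ℤ] ℚ),
      (∀ ν : EpiSet H (Fin r → ℤ),
        Φ (Quot.mk _ ν) = annSub ((ν.1.ker : AddSubgroup H))) ∧
      Function.Injective Φ ∧
      Set.range Φ = {W : Submodule ℚ (H →ₗ[ℤ] ℚ) | Module.finrank ℚ W = r}) ∧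
    ∀ (ν : EpiSet H (Fin r → ℤ)) (ξ : AddSubgroup H),
      rkOf ↥(ν.1.ker ⊔ ξ) < rkOf H ↔ annSub (ν.1.ker) ⊓ annSub ξ ≠ ⊥ := by
  haveI : Module.Finite ℤ H := Module.Finite.iff_addGroup_fg.mpr ‹_›
  constructor
  · refine ⟨Quot.lift (fun ν : EpiSet H (Fin r → ℤ) => annSub ν.1.ker) ?_,
      fun ν => rfl, ?_, ?_⟩
    · rintro ν₁ ν₂ ⟨α, hα⟩
      have hk : ν₁.1.ker = ν₂.1.ker := by
        ext x
        rw [AddMonoidHom.mem_ker, AddMonoidHom.mem_ker, ← hα x]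
        constructor
        · intro hx
          rw [hx, map_zero]
        · intro hx
          exact α.injective (by rw [hx, map_zero])
      simp only [hk]
    · intro a b h
      induction a using Quot.ind with
      | _ ν₁ =>
        induction b using Quot.ind with
        | _ ν₂ =>
          have h' : annSub ν₁.1.ker = annSub ν₂.1.ker := h
          have hk : ν₁.1.ker = ν₂.1.ker := by
            ext x
            rw [S9Aux.ker_recover r ν₁.1 x, S9Aux.ker_recover r ν₂.1 x, h']
          obtain ⟨α, hα⟩ := S9Aux.gammaRel_of_ker_eq r ν₁.1 ν₂.1 ν₁.2 ν₂.2 hk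
          exact Quot.sound ⟨α, hα⟩
    · ext W
      constructor
      · rintro ⟨q, rfl⟩
        induction q using Quot.ind with
        | _ ν => exact S9Aux.ann_ker_finrank r ν.1 ν.2
      · intro hW
        obtain ⟨ν, hsurj, hann⟩ := S9Aux.exists_epi r W hW
        exact ⟨Quot.mk _ ⟨ν, hsurj⟩, hann⟩
  · intro ν ξ
    rw [← S9Aux.ann_sup]
    exact S9Aux.rk_lt_iff_ann_ne_bot _
end

section
/- Let H and A be finitely generated abelian groups such that there exists a surjective homomorphism H → A; let Ā = A/Tors(A) and π : A → Ā the projection, and let q : Γ(H, A) → Γ(H, Ā) be the map [ν] ↦ [π ∘ ν]. For any subgroup ξ ≤ H, define σ_A(ξ) = {[ν] ∈ Γ(H,A) : rank(ker ν + ξ) < rank H} and σ_Ā(ξ) = {[μ] ∈ Γ(H,Ā) : rank(ker μ + ξ) < rank H}. Then: (i) q(σ_A(ξ)) = σ_Ā(ξ); and (ii) q⁻¹(σ_Ā(ξ)) = σ_A(ξ). -/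
open scoped TensorProduct

/-- Composition of an epimorphism `H → A` with the projection `A → A/Tors(A)`. -/
def qRep {H A : Type*} [AddCommGroup H] [AddCommGroup A] (ν : EpiSet H A) :
    EpiSet H (A ⧸ AddCommGroup.torsion A) :=
  ⟨(QuotientAddGroup.mk' (AddCommGroup.torsion A)).comp ν.1,
    (QuotientAddGroup.mk'_surjective (AddCommGroup.torsion A)).comp ν.2⟩

/-- The "special Schubert variety" `σ_A(ξ) ⊆ Γ(H,A)`. -/
def sigmaSet {H : Type*} [AddCommGroup H] (A : Type*) [AddCommGroup A]
    (ξ : AddSubgroup H) : Set (GammaSet H A) :=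
  {c | ∃ ν : EpiSet H A, Quot.mk _ ν = c ∧ rkOf ↥(ν.1.ker ⊔ ξ) < rkOf H}

instance : Module.Flat ℤ ℚ := IsLocalization.flat ℚ (nonZeroDivisors ℤ)

lemma gammaRel_equivalence (G A : Type*) [AddGroup G] [AddGroup A] :
    Equivalence (GammaRel G A) := by
  constructor
  · exact fun ν => ⟨AddEquiv.refl A, fun g => rfl⟩
  · rintro ν₁ ν₂ ⟨α, hα⟩
    exact ⟨α.symm, fun g => by rw [← hα g, α.symm_apply_apply]⟩
  · rintro ν₁ ν₂ ν₃ ⟨α, hα⟩ ⟨β, hβ⟩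
    exact ⟨α.trans β, fun g => by simp [AddEquiv.trans_apply, hα g, hβ g]⟩

lemma ker_eq_of_gammaRel {G A : Type*} [AddGroup G] [AddGroup A] {ν₁ ν₂ : EpiSet G A}
    (h : GammaRel G A ν₁ ν₂) : ν₁.1.ker = ν₂.1.ker := by
  obtain ⟨α, hα⟩ := h
  ext x
  simp only [AddMonoidHom.mem_ker]
  rw [← hα x, map_eq_zero_iff _ α.injective]

lemma gammaRel_of_quot_eq {G A : Type*} [AddGroup G] [AddGroup A] {ν₁ ν₂ : EpiSet G A}
    (h : Quot.mk (GammaRel G A) ν₁ = Quot.mk (GammaRel G A) ν₂) : GammaRel G A ν₁ ν₂ :=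
  ((gammaRel_equivalence G A).eqvGen_iff).mp (Quot.eqvGen_exact h)

lemma baseChange_bijective {M N : Type*} [AddCommGroup M] [AddCommGroup N] (f : M →ₗ[ℤ] N)
    (hinj : Function.Injective f)
    (hsur : ∀ y : N, ∃ (n : ℤ) (x : M), n ≠ 0 ∧ f x = n • y) :
    Function.Bijective (f.baseChange ℚ) := by
  have hcoe : ⇑(f.baseChange ℚ) = ⇑(LinearMap.lTensor ℚ f) := by
    have : (f.baseChange ℚ).restrictScalars ℤ = LinearMap.lTensor ℚ f :=
      TensorProduct.ext' (by intro q m; rfl)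
    rw [← this]; rfl
  constructor
  · rw [hcoe]
    exact Module.Flat.lTensor_preserves_injective_linearMap f hinj
  · intro y
    induction y using TensorProduct.induction_on with
    | zero => exact ⟨0, map_zero _⟩
    | tmul q n =>
      obtain ⟨k, x, hk, hx⟩ := hsur n
      refine ⟨((k : ℚ)⁻¹ * q) ⊗ₜ[ℤ] x, ?_⟩
      rw [LinearMap.baseChange_tmul, hx, ← TensorProduct.smul_tmul]
      congr 1
      rw [zsmul_eq_mul]
      have : (k : ℚ) ≠ 0 := by exact_mod_cast hk
      field_simp
    | add x y hx hy =>
      obtain ⟨x', hx'⟩ := hx; obtain ⟨y', hy'⟩ := hy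
      exact ⟨x' + y', by rw [map_add, hx', hy']⟩

lemma rkOf_eq_of_le_of_torsion {M : Type*} [AddCommGroup M] {B B' : AddSubgroup M} (hle : B ≤ B')
    (htor : ∀ x : B', ∃ n : ℤ, n ≠ 0 ∧ n • (x : M) ∈ B) : rkOf B = rkOf B' := by
  have hb : Function.Bijective ((AddSubgroup.inclusion hle).toIntLinearMap.baseChange ℚ) := by
    apply baseChange_bijective
    · exact fun a b hab => AddSubgroup.inclusion_injective hle hab
    · intro y
      obtain ⟨n, hn, hny⟩ := htor y
      refine ⟨n, ⟨n • (y : M), hny⟩, hn, Subtype.ext ?_⟩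
      simp [AddSubgroup.inclusion]
  exact (LinearEquiv.ofBijective _ hb).finrank_eq

lemma qRep_ker_mem {H A : Type*} [AddCommGroup H] [AddCommGroup A] (ν : EpiSet H A) (x : H) :
    x ∈ (qRep ν).1.ker ↔ ν.1 x ∈ AddCommGroup.torsion A := by
  simp only [qRep, AddMonoidHom.mem_ker, AddMonoidHom.comp_apply, QuotientAddGroup.mk'_apply]
  exact QuotientAddGroup.eq_zero_iff _

lemma rank_key {H A : Type*} [AddCommGroup H] [AddCommGroup A] (ν : EpiSet H A)
    (ξ : AddSubgroup H) : rkOf ↥(ν.1.ker ⊔ ξ) = rkOf ↥((qRep ν).1.ker ⊔ ξ) := by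
  have hKle : ν.1.ker ≤ (qRep ν).1.ker := by
    intro x hx
    rw [qRep_ker_mem]
    rw [AddMonoidHom.mem_ker] at hx
    rw [hx]
    exact zero_mem _
  apply rkOf_eq_of_le_of_torsion (sup_le_sup_right hKle ξ)
  intro x
  obtain ⟨k, hk, s, hs, hks⟩ := AddSubgroup.mem_sup.mp x.2
  rw [qRep_ker_mem] at hk
  obtain ⟨n, hn, hnk⟩ := (isOfFinAddOrder_iff_nsmul_eq_zero).mp hk
  refine ⟨(n : ℤ), by exact_mod_cast hn.ne', ?_⟩
  rw [← hks, smul_add]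
  refine AddSubgroup.add_mem_sup ?_ (AddSubgroup.zsmul_mem _ hs _)
  rw [AddMonoidHom.mem_ker, map_zsmul, natCast_zsmul, hnk]




noncomputable def myProdEquiv (M N : Type*) [AddCommGroup M] [AddCommGroup N] :
    (ℚ ⊗[ℤ] (M × N)) ≃ₗ[ℚ] (ℚ ⊗[ℤ] M) × (ℚ ⊗[ℤ] N) :=
  LinearEquiv.ofLinear
    (LinearMap.prod ((LinearMap.fst ℤ M N).baseChange ℚ) ((LinearMap.snd ℤ M N).baseChange ℚ))
    (LinearMap.coprod ((LinearMap.inl ℤ M N).baseChange ℚ) ((LinearMap.inr ℤ M N).baseChange ℚ))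
    (by ext x <;> simp)
    (by ext x <;> simp [Prod.ext_iff])

lemma rkOf_congr {M N : Type*} [AddCommGroup M] [AddCommGroup N] (e : M ≃ₗ[ℤ] N) :
    rkOf M = rkOf N :=
  LinearEquiv.finrank_eq (LinearEquiv.baseChange ℤ ℚ _ _ e)

lemma rkOf_prod (M N : Type*) [AddCommGroup M] [AddCommGroup N]
    [Module.Finite ℤ M] [Module.Finite ℤ N] : rkOf (M × N) = rkOf M + rkOf N := by
  have h1 : Module.Finite ℚ (ℚ ⊗[ℤ] M) := Module.Finite.base_change ℤ ℚ M
  have h2 : Module.Finite ℚ (ℚ ⊗[ℤ] N) := Module.Finite.base_change ℤ ℚ N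
  unfold rkOf
  rw [LinearEquiv.finrank_eq (myProdEquiv M N), Module.finrank_prod]

lemma rkOf_eq_zero_of_torsion (M : Type*) [AddCommGroup M]
    (h : ∀ x : M, ∃ n : ℤ, n ≠ 0 ∧ n • x = 0) : rkOf M = 0 := by
  have : Subsingleton (ℚ ⊗[ℤ] M) := by
    refine subsingleton_iff_forall_eq 0 |>.mpr fun x => ?_
    induction x using TensorProduct.induction_on with
    | zero => rfl
    | tmul q m =>
      obtain ⟨n, hn, hnm⟩ := h m
      have h1 : ((n : ℚ)⁻¹ * q) ⊗ₜ[ℤ] (n • m) = q ⊗ₜ[ℤ] m := by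
        rw [← TensorProduct.smul_tmul]
        congr 1
        rw [zsmul_eq_mul]
        have : (n : ℚ) ≠ 0 := by exact_mod_cast hn
        field_simp
      rw [← h1, hnm, TensorProduct.tmul_zero]
    | add x y hx hy => rw [hx, hy, add_zero]
  exact Module.finrank_zero_of_subsingleton

lemma rkOf_free (F : Type*) [AddCommGroup F] [Module.Free ℤ F] :
    rkOf F = Module.finrank ℤ F := Module.finrank_baseChange

lemma free_equiv_of_rk {F F' : Type*} [AddCommGroup F] [AddCommGroup F']
    [Module.Free ℤ F] [Module.Finite ℤ F] [Module.Free ℤ F'] [Module.Finite ℤ F']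
    (h : rkOf F = rkOf F') : Nonempty (F ≃ₗ[ℤ] F') := by
  rw [rkOf_free, rkOf_free] at h
  have b := Module.Free.chooseBasis ℤ F
  have b' := Module.Free.chooseBasis ℤ F'
  refine ⟨b.equiv b' (Fintype.equivOfCardEq ?_)⟩
  rw [← Module.finrank_eq_card_chooseBasisIndex, ← Module.finrank_eq_card_chooseBasisIndex, h]

/-- Splitting: if `g` is a section of `f` then `M ≃ ker f × N`. -/
noncomputable def splitEquiv {M N : Type*} [AddCommGroup M] [AddCommGroup N]
    (f : M →ₗ[ℤ] N) (g : N →ₗ[ℤ] M) (hfg : ∀ n, f (g n) = n) :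
    M ≃ₗ[ℤ] ↥(LinearMap.ker f) × N where
  toFun m := (⟨m - g (f m), by simp [LinearMap.mem_ker, hfg]⟩, f m)
  invFun p := p.1.1 + g p.2
  left_inv m := by simp
  right_inv p := by
    obtain ⟨⟨x, hx⟩, n⟩ := p
    rw [LinearMap.mem_ker] at hx
    ext
    · simp [hx, hfg]
    · simp [hx, hfg]
  map_add' x y := by
    ext
    · simp
      abel
    · simp
  map_smul' c x := by
    ext
    · simp [smul_sub]
    · simp


section Tors
variable {H : Type*} [AddCommGroup H]

lemma tors_iff {K : Submodule ℤ H} (x : ↥K) :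
    x ∈ Submodule.torsion ℤ ↥K ↔ ∃ n : ℤ, n ≠ 0 ∧ n • (x : H) = 0 := by
  rw [Submodule.mem_torsion_iff]
  constructor
  · rintro ⟨a, ha⟩
    refine ⟨a, mem_nonZeroDivisors_iff_ne_zero.mp a.2, ?_⟩
    have := congrArg (Subtype.val) ha
    simpa [Submonoid.smul_def] using this
  · rintro ⟨n, hn, hnx⟩
    exact ⟨⟨n, mem_nonZeroDivisors_of_ne_zero hn⟩, Subtype.ext (by simpa using hnx)⟩

noncomputable def torsionEquiv (K K₀ : Submodule ℤ H)
    (hK : ∀ x : H, (∃ n : ℤ, n ≠ 0 ∧ n • x = 0) → x ∈ K)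
    (hK₀ : ∀ x : H, (∃ n : ℤ, n ≠ 0 ∧ n • x = 0) → x ∈ K₀) :
    ↥(Submodule.torsion ℤ ↥K) ≃ₗ[ℤ] ↥(Submodule.torsion ℤ ↥K₀) where
  toFun x := ⟨⟨(x.1 : H), hK₀ _ ((tors_iff x.1).mp x.2)⟩,
    (tors_iff _).mpr ((tors_iff x.1).mp x.2)⟩
  invFun x := ⟨⟨(x.1 : H), hK _ ((tors_iff x.1).mp x.2)⟩,
    (tors_iff _).mpr ((tors_iff x.1).mp x.2)⟩
  left_inv x := by ext; rfl
  right_inv x := by ext; rfl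
  map_add' x y := by ext; rfl
  map_smul' c x := by ext; rfl

end Tors


lemma lift_epi {H A : Type*} [AddCommGroup H] [AddGroup.FG H] [AddCommGroup A] [AddGroup.FG A]
    (hex : Nonempty (EpiSet H A)) (μ : EpiSet H (A ⧸ AddCommGroup.torsion A)) :
    ∃ ν : EpiSet H A, qRep ν = μ := by
  classical
  haveI hHfin : Module.Finite ℤ H := Module.Finite.iff_addGroup_fg.mpr ‹_›
  haveI hAfin : Module.Finite ℤ A := Module.Finite.iff_addGroup_fg.mpr ‹_›
  haveI : IsNoetherian ℤ H := isNoetherian_of_isNoetherianRing_of_finite ℤ H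
  let T := AddCommGroup.torsion A
  let π : A →ₗ[ℤ] (A ⧸ T) := (QuotientAddGroup.mk' T).toIntLinearMap
  have hπ : Function.Surjective π := QuotientAddGroup.mk'_surjective T
  have htf : ∀ (n : ℤ) (x : A ⧸ T), n ≠ 0 → n • x = 0 → x = 0 := by
    intro n x hn hx
    obtain ⟨a, rfl⟩ := hπ x
    have h1 : π (n • a) = 0 := by rw [map_smul]; exact hx
    have ha : n • a ∈ T := (QuotientAddGroup.eq_zero_iff _).mp h1
    obtain ⟨m, hm, hma⟩ := (isOfFinAddOrder_iff_nsmul_eq_zero).mp ha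
    have : ((m : ℤ) * n) • a = 0 := by
      rw [mul_smul, natCast_zsmul, hma]
    have haf : IsOfFinAddOrder a := (isOfFinAddOrder_iff_zsmul_eq_zero).mpr
      ⟨(m : ℤ) * n, mul_ne_zero (by exact_mod_cast hm.ne') hn, this⟩
    exact (QuotientAddGroup.eq_zero_iff _).mpr haf
  haveI : NoZeroSMulDivisors ℤ (A ⧸ T) := by
    constructor
    intro n x h
    by_cases hn : n = 0
    · exact Or.inl hn
    · exact Or.inr (htf n x hn h)
  haveI : Module.Finite ℤ (A ⧸ T) := Module.Finite.of_surjective π hπ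
  haveI : Module.Free ℤ (A ⧸ T) := Module.free_of_finite_type_torsion_free'
  -- sections
  obtain ⟨s, hs⟩ := Module.projective_lifting_property π (LinearMap.id) hπ
  have hs' : ∀ x, π (s x) = x := fun x => congrArg (fun f => f x) (congrArg DFunLike.coe hs)
  let μL : H →ₗ[ℤ] (A ⧸ T) := μ.1.toIntLinearMap
  have hμL : Function.Surjective μL := μ.2
  obtain ⟨u, hu⟩ := Module.projective_lifting_property μL (LinearMap.id) hμL
  have hu' : ∀ x, μL (u x) = x := fun x => congrArg (fun f => f x) (congrArg DFunLike.coe hu)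
  obtain ⟨lam⟩ := hex
  let lamL : H →ₗ[ℤ] A := lam.1.toIntLinearMap
  have hlam : Function.Surjective lamL := lam.2
  let μ₀ : H →ₗ[ℤ] (A ⧸ T) := π.comp lamL
  have hμ₀ : Function.Surjective μ₀ := hπ.comp hlam
  obtain ⟨u₀, hu₀⟩ := Module.projective_lifting_property μ₀ (LinearMap.id) hμ₀
  have hu₀' : ∀ x, μ₀ (u₀ x) = x := fun x => congrArg (fun f => f x) (congrArg DFunLike.coe hu₀)
  set K := LinearMap.ker μL with hK
  set K₀ := LinearMap.ker μ₀ with hK₀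
  have htorsK : ∀ x : H, (∃ n : ℤ, n ≠ 0 ∧ n • x = 0) → x ∈ K := by
    rintro x ⟨n, hn, hnx⟩
    have : n • μL x = 0 := by rw [← map_smul, hnx, map_zero]
    exact LinearMap.mem_ker.mpr (htf n _ hn this)
  have htorsK₀ : ∀ x : H, (∃ n : ℤ, n ≠ 0 ∧ n • x = 0) → x ∈ K₀ := by
    rintro x ⟨n, hn, hnx⟩
    have : n • μ₀ x = 0 := by rw [← map_smul, hnx, map_zero]
    exact LinearMap.mem_ker.mpr (htf n _ hn this)
  -- rank equality of K and K₀
  haveI : Module.Finite ℤ ↥K := Module.Finite.iff_fg.mpr (IsNoetherian.noetherian K)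
  haveI : Module.Finite ℤ ↥K₀ := Module.Finite.iff_fg.mpr (IsNoetherian.noetherian K₀)
  have eH : H ≃ₗ[ℤ] ↥K × (A ⧸ T) := splitEquiv μL u hu'
  have eH₀ : H ≃ₗ[ℤ] ↥K₀ × (A ⧸ T) := splitEquiv μ₀ u₀ hu₀'
  have hrkK : rkOf ↥K = rkOf ↥K₀ := by
    have h1 : rkOf H = rkOf ↥K + rkOf (A ⧸ T) := (rkOf_congr eH).trans (rkOf_prod _ _)
    have h2 : rkOf H = rkOf ↥K₀ + rkOf (A ⧸ T) := (rkOf_congr eH₀).trans (rkOf_prod _ _)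
    omega
  -- torsion/free splittings of K and K₀
  haveI : Module.Finite ℤ (↥K ⧸ Submodule.torsion ℤ ↥K) := Module.Finite.quotient ℤ _
  haveI : Module.Finite ℤ (↥K₀ ⧸ Submodule.torsion ℤ ↥K₀) := Module.Finite.quotient ℤ _
  haveI : Module.Free ℤ (↥K ⧸ Submodule.torsion ℤ ↥K) := Module.free_of_finite_type_torsion_free'
  haveI : Module.Free ℤ (↥K₀ ⧸ Submodule.torsion ℤ ↥K₀) := Module.free_of_finite_type_torsion_free'
  obtain ⟨w, hw⟩ := Module.projective_lifting_property (Submodule.torsion ℤ ↥K).mkQ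
    (LinearMap.id) (Submodule.mkQ_surjective _)
  have hw' : ∀ x, (Submodule.torsion ℤ ↥K).mkQ (w x) = x :=
    fun x => congrArg (fun f => f x) (congrArg DFunLike.coe hw)
  obtain ⟨w₀, hw₀⟩ := Module.projective_lifting_property (Submodule.torsion ℤ ↥K₀).mkQ
    (LinearMap.id) (Submodule.mkQ_surjective _)
  have hw₀' : ∀ x, (Submodule.torsion ℤ ↥K₀).mkQ (w₀ x) = x :=
    fun x => congrArg (fun f => f x) (congrArg DFunLike.coe hw₀)
  have eK : ↥K ≃ₗ[ℤ] ↥(LinearMap.ker (Submodule.torsion ℤ ↥K).mkQ) × (↥K ⧸ Submodule.torsion ℤ ↥K) :=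
    splitEquiv _ w hw'
  have eK₀ : ↥K₀ ≃ₗ[ℤ] ↥(LinearMap.ker (Submodule.torsion ℤ ↥K₀).mkQ) × (↥K₀ ⧸ Submodule.torsion ℤ ↥K₀) :=
    splitEquiv _ w₀ hw₀'
  have eT1 : ↥(LinearMap.ker (Submodule.torsion ℤ ↥K).mkQ) ≃ₗ[ℤ] ↥(Submodule.torsion ℤ ↥K) :=
    LinearEquiv.ofEq _ _ (Submodule.ker_mkQ _)
  have eT0 : ↥(LinearMap.ker (Submodule.torsion ℤ ↥K₀).mkQ) ≃ₗ[ℤ] ↥(Submodule.torsion ℤ ↥K₀) :=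
    LinearEquiv.ofEq _ _ (Submodule.ker_mkQ _)
  have eT : ↥(Submodule.torsion ℤ ↥K) ≃ₗ[ℤ] ↥(Submodule.torsion ℤ ↥K₀) :=
    torsionEquiv K K₀ htorsK htorsK₀
  -- rank of quotient parts
  have htorsrk : ∀ (L : Submodule ℤ H), rkOf ↥(Submodule.torsion ℤ ↥L) = 0 := by
    intro L
    apply rkOf_eq_zero_of_torsion
    rintro ⟨x, hx⟩
    obtain ⟨n, hn, hnx⟩ := (tors_iff x).mp hx
    exact ⟨n, hn, Subtype.ext (Subtype.ext (by simpa using hnx))⟩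
  have hrkQ : rkOf (↥K ⧸ Submodule.torsion ℤ ↥K) = rkOf (↥K₀ ⧸ Submodule.torsion ℤ ↥K₀) := by
    haveI : Module.Finite ℤ ↥(Submodule.torsion ℤ ↥K) :=
      Module.Finite.iff_fg.mpr (IsNoetherian.noetherian _)
    haveI : Module.Finite ℤ ↥(Submodule.torsion ℤ ↥K₀) :=
      Module.Finite.iff_fg.mpr (IsNoetherian.noetherian _)
    have h1 : rkOf ↥K = rkOf ↥(Submodule.torsion ℤ ↥K) + rkOf (↥K ⧸ Submodule.torsion ℤ ↥K) := by
      refine (rkOf_congr (eK.trans (LinearEquiv.prodCongr eT1 (LinearEquiv.refl ℤ _)))).trans ?_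
      exact rkOf_prod _ _
    have h2 : rkOf ↥K₀ = rkOf ↥(Submodule.torsion ℤ ↥K₀) + rkOf (↥K₀ ⧸ Submodule.torsion ℤ ↥K₀) := by
      refine (rkOf_congr (eK₀.trans (LinearEquiv.prodCongr eT0 (LinearEquiv.refl ℤ _)))).trans ?_
      exact rkOf_prod _ _
    rw [htorsrk K] at h1
    rw [htorsrk K₀] at h2
    omega
  obtain ⟨eQ⟩ := free_equiv_of_rk hrkQ
  -- the isomorphism K ≃ K₀
  have φ : ↥K ≃ₗ[ℤ] ↥K₀ :=
    (eK.trans (LinearEquiv.prodCongr (eT1.trans (eT.trans eT0.symm)) eQ)).trans eK₀.symm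
  -- construct ν
  have hd : ∀ h : H, ((LinearMap.id : H →ₗ[ℤ] H) - u.comp μL) h ∈ K := by
    intro h
    simp only [LinearMap.mem_ker, LinearMap.sub_apply, LinearMap.id_apply, LinearMap.comp_apply,
      map_sub, hu', hK]
    exact sub_self _
  let d : H →ₗ[ℤ] ↥K := LinearMap.codRestrict K ((LinearMap.id : H →ₗ[ℤ] H) - u.comp μL) hd
  let ν : H →ₗ[ℤ] A := (s.comp μL) + (lamL.comp (K₀.subtype.comp (φ.toLinearMap.comp d)))
  have hπν : ∀ h : H, π (ν h) = μL h := by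
    intro h
    have hmem : (φ (d h) : H) ∈ K₀ := (φ (d h)).2
    have : π (lamL ((φ (d h) : H))) = 0 := LinearMap.mem_ker.mp hmem
    simp only [ν, LinearMap.add_apply, LinearMap.comp_apply, map_add, hs', Submodule.coe_subtype,
      LinearEquiv.coe_coe]
    rw [this, add_zero]
  -- ν sends elements of K to lamL of their φ-image
  have hνk : ∀ k : ↥K, ν (k : H) = lamL ((φ k : H)) := by
    intro k
    have hk0 : μL (k : H) = 0 := k.2
    have hdk : d (k : H) = k := by
      apply Subtype.ext
      simp only [d, LinearMap.codRestrict_apply, LinearMap.sub_apply, LinearMap.id_apply,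
        LinearMap.comp_apply, hk0, map_zero, sub_zero]
    simp only [ν, LinearMap.add_apply, LinearMap.comp_apply, hk0, map_zero, zero_add,
      Submodule.coe_subtype, LinearEquiv.coe_coe, hdk]
  have hνs : Function.Surjective ν := by
    intro a
    obtain ⟨h₁, hh₁⟩ := hμL (π a)
    have hb : π (a - ν h₁) = 0 := by
      rw [map_sub, hπν, hh₁, sub_self]
    have hbm : a - ν h₁ ∈ T := (QuotientAddGroup.eq_zero_iff _).mp hb
    obtain ⟨h₂, hh₂⟩ := hlam (a - ν h₁)
    have hh₂K₀ : h₂ ∈ K₀ := by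
      have : π (lamL h₂) = 0 := by rw [hh₂]; exact (QuotientAddGroup.eq_zero_iff _).mpr hbm
      exact LinearMap.mem_ker.mpr this
    set k : ↥K := φ.symm ⟨h₂, hh₂K₀⟩ with hk
    refine ⟨h₁ + (k : H), ?_⟩
    rw [map_add, hνk k, hk, LinearEquiv.apply_symm_apply, hh₂]
    abel
  refine ⟨⟨ν.toAddMonoidHom, hνs⟩, ?_⟩
  apply Subtype.ext
  ext h
  simpa [qRep, π, μL] using hπν h

/-- The natural projection `q : Γ(H,A) → Γ(H,Ā)` maps `σ_A(ξ)` onto `σ_Ā(ξ)`, and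
`σ_A(ξ)` is the full preimage of `σ_Ā(ξ)`. -/
theorem statement10 {H A : Type*} [AddCommGroup H] [AddGroup.FG H]
    [AddCommGroup A] [AddGroup.FG A]
    (hex : Nonempty (EpiSet H A)) (ξ : AddSubgroup H)
    (q : GammaSet H A → GammaSet H (A ⧸ AddCommGroup.torsion A))
    (hq : ∀ ν : EpiSet H A, q (Quot.mk _ ν) = Quot.mk _ (qRep ν)) :
    q '' sigmaSet A ξ = sigmaSet (A ⧸ AddCommGroup.torsion A) ξ ∧
    q ⁻¹' sigmaSet (A ⧸ AddCommGroup.torsion A) ξ = sigmaSet A ξ := by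
  constructor
  · ext c
    constructor
    · rintro ⟨c₀, ⟨ν, rfl, hrk⟩, rfl⟩
      exact ⟨qRep ν, (hq ν).symm, by rwa [← rank_key ν ξ]⟩
    · rintro ⟨μ, hμ, hrk⟩
      obtain ⟨ν, hν⟩ := lift_epi hex μ
      refine ⟨Quot.mk _ ν, ⟨ν, rfl, ?_⟩, by rw [hq ν, hν, hμ]⟩
      rw [rank_key ν ξ, hν]
      exact hrk
  · ext c
    constructor
    · intro hc
      obtain ⟨ν, rfl⟩ := Quot.exists_rep c
      change q (Quot.mk _ ν) ∈ sigmaSet _ ξ at hc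
      rw [hq] at hc
      obtain ⟨μ, hμ, hrk⟩ := hc
      have hker : μ.1.ker = (qRep ν).1.ker := ker_eq_of_gammaRel (gammaRel_of_quot_eq hμ)
      exact ⟨ν, rfl, by rw [rank_key ν ξ, ← hker]; exact hrk⟩
    · rintro ⟨ν, rfl, hrk⟩
      change q (Quot.mk _ ν) ∈ sigmaSet _ ξ
      rw [hq]
      exact ⟨qRep ν, rfl, by rwa [← rank_key ν ξ]⟩
end

section
/- Let H be a finitely generated abelian group with character group Ĥ, and let ξ, χ ≤ H be subgroups such that the determinant group ξ̄/ξ is cyclic. Let η ∈ Ĥ be any character satisfying η(x) = 1 for all x ∈ ξ and {x ∈ ξ̄ : η(x) = 1} = ξ (i.e., η restricts to a generator of the character group of ξ̄/ξ). Then the following are equivalent: (a) χ ∩ ξ̄ ⊆ ξ; (b) there exists ρ ∈ Ĥ with ρ(x) = 1 for all x ∈ χ and (η⁻¹ρ)(y) = 1 for all y ∈ ξ̄, i.e., V(χ) ∩ ηV(ξ̄) ≠ ∅; (c) η(z) = 1 for all z ∈ χ ∩ ξ̄. In particular, the validity of (b) and (c) does not depend on the choice of η with the stated property. -/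
open scoped TensorProduct Pointwise

noncomputable instance : RootableBy ℂˣ ℕ :=
  rootableByOfPowLeftSurj _ _ (fun {n} hn u => by
    obtain ⟨z, hz⟩ := IsAlgClosed.exists_pow_nat_eq (k := ℂ) (u : ℂ) (Nat.pos_of_ne_zero hn)
    have hz0 : z ≠ 0 := by
      intro h
      rw [h, zero_pow hn] at hz
      exact u.ne_zero hz.symm
    exact ⟨Units.mk0 z hz0, Units.ext (by simpa using hz)⟩)

noncomputable instance : RootableBy ℂˣ ℤ := Group.rootableByIntOfRootableByNat ℂˣ

noncomputable instance : DivisibleBy (Additive ℂˣ) ℤ where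
  div a n := Additive.ofMul (RootableBy.root a.toMul n)
  div_zero a := by simp [RootableBy.root_zero]
  div_cancel a hn := by
    rw [← ofMul_zpow, RootableBy.root_cancel _ hn]
    rfl

lemma extend_char {A B : Type*} [AddCommGroup A] [AddCommGroup B]
    (i : A →+ B) (hi : Function.Injective i) (f : A →+ Additive ℂˣ) :
    ∃ g : B →+ Additive ℂˣ, ∀ a, g (i a) = f a := by
  obtain ⟨g, hg⟩ :=
    (Module.Baer.of_divisible (Additive ℂˣ)).extension_property_addMonoidHom i hi f
  exact ⟨g, fun a => DFunLike.congr_fun hg a⟩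

/-- For a subgroup `ξ` with cyclic determinant group and a character `η` restricting to
a generator of the character group of `ξ̄/ξ`, the conditions (a) `χ ∩ ξ̄ ⊆ ξ`,
(b) `V(χ) ∩ ηV(ξ̄) ≠ ∅`, and (c) `η` vanishes on `χ ∩ ξ̄`, are equivalent. -/
theorem statement11 {H : Type*} [AddCommGroup H] [AddGroup.FG H]
    (ξ χ : AddSubgroup H) (hcyc : IsAddCyclic (detGroup ξ)) (η : CharGp H)
    (hη1 : ∀ x ∈ ξ, η (Multiplicative.ofAdd x) = 1)
    (hη2 : {x : H | x ∈ pclose ξ ∧ η (Multiplicative.ofAdd x) = 1} = (ξ : Set H)) :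
    ((χ ⊓ pclose ξ ≤ ξ) ↔ (charV χ ∩ transTorus η (pclose ξ)).Nonempty) ∧
    ((χ ⊓ pclose ξ ≤ ξ) ↔ ∀ z ∈ χ ⊓ pclose ξ, η (Multiplicative.ofAdd z) = 1) := by
  have hca : (∀ z ∈ χ ⊓ pclose ξ, η (Multiplicative.ofAdd z) = 1) → χ ⊓ pclose ξ ≤ ξ := by
    intro hc z hz
    have h := hz
    rw [AddSubgroup.mem_inf] at h
    have hm : z ∈ {x : H | x ∈ pclose ξ ∧ η (Multiplicative.ofAdd x) = 1} := ⟨h.2, hc z hz⟩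
    rwa [hη2] at hm
  have hac : (χ ⊓ pclose ξ ≤ ξ) → ∀ z ∈ χ ⊓ pclose ξ, η (Multiplicative.ofAdd z) = 1 :=
    fun ha z hz => hη1 z (ha hz)
  have hbc : (charV χ ∩ transTorus η (pclose ξ)).Nonempty →
      ∀ z ∈ χ ⊓ pclose ξ, η (Multiplicative.ofAdd z) = 1 := by
    rintro ⟨ρ, hρχ, σ, hσ, rfl⟩ z hz
    rw [AddSubgroup.mem_inf] at hz
    have h1 : (η * σ) (Multiplicative.ofAdd z) = 1 := hρχ z hz.1
    have h2 : σ (Multiplicative.ofAdd z) = 1 := hσ z hz.2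
    simpa [h2] using h1
  have hcb : (∀ z ∈ χ ⊓ pclose ξ, η (Multiplicative.ofAdd z) = 1) →
      (charV χ ∩ transTorus η (pclose ξ)).Nonempty := by
    intro hc
    classical
    set P := pclose ξ with hPdef
    set N : AddSubgroup P := χ.addSubgroupOf P with hNdef
    set η₀ : H →+ Additive ℂˣ := MonoidHom.toAdditiveRight η with hη₀def
    set φ : ↥P →+ Additive ℂˣ := η₀.comp P.subtype with hφdef
    have hφ : ∀ y ∈ N, φ y = 0 := by
      intro y hy
      have hyz : (y : H) ∈ χ ⊓ pclose ξ := AddSubgroup.mem_inf.mpr ⟨hy, y.2⟩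
      have h1 : η (Multiplicative.ofAdd (y : H)) = 1 := hc _ hyz
      simp [hφdef, hη₀def, MonoidHom.coe_toAdditiveRight, h1]
    set f : ↥P ⧸ N →+ Additive ℂˣ := QuotientAddGroup.lift N φ hφ with hfdef
    set i : ↥P ⧸ N →+ H ⧸ χ := QuotientAddGroup.map N χ P.subtype le_rfl with hidef
    have hi : Function.Injective i := by
      refine (injective_iff_map_eq_zero i).mpr fun a => ?_
      induction a using QuotientAddGroup.induction_on with
      | H y =>
        intro ha
        have h0 : ((y : H) : H ⧸ χ) = 0 := by
          exact ha
        have hyχ : (y : H) ∈ χ := (QuotientAddGroup.eq_zero_iff _).mp h0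
        exact (QuotientAddGroup.eq_zero_iff y).mpr (AddSubgroup.mem_addSubgroupOf.mpr hyχ)
    obtain ⟨g, hg⟩ := extend_char i hi f
    set ρ₀ : H →+ Additive ℂˣ := g.comp (QuotientAddGroup.mk' χ) with hρ₀def
    set ρ : CharGp H := AddMonoidHom.toMultiplicativeLeft ρ₀ with hρdef
    have hρχ : ∀ x ∈ χ, ρ (Multiplicative.ofAdd x) = 1 := by
      intro x hx
      have h1 : ρ₀ x = 0 := by
        have : ((x : H) : H ⧸ χ) = 0 := (QuotientAddGroup.eq_zero_iff _).mpr hx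
        simp [hρ₀def, QuotientAddGroup.mk'_apply, this]
      simp [hρdef, AddMonoidHom.coe_toMultiplicativeLeft, h1]
    have hρP : ∀ y ∈ P, ρ (Multiplicative.ofAdd y) = η (Multiplicative.ofAdd y) := by
      intro y hy
      have h2 := hg (QuotientAddGroup.mk (⟨y, hy⟩ : ↥P))
      have h3 : i (QuotientAddGroup.mk (⟨y, hy⟩ : ↥P)) = QuotientAddGroup.mk' χ y := by
        rfl
      have h1 : ρ₀ y = Additive.ofMul (η (Multiplicative.ofAdd y)) := by
        calc ρ₀ y = g (i (QuotientAddGroup.mk (⟨y, hy⟩ : ↥P))) := by rw [h3]; rfl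
        _ = f (QuotientAddGroup.mk (⟨y, hy⟩ : ↥P)) := h2
        _ = φ ⟨y, hy⟩ := rfl
        _ = Additive.ofMul (η (Multiplicative.ofAdd y)) := rfl
      simp [hρdef, AddMonoidHom.coe_toMultiplicativeLeft, h1]
    refine ⟨ρ, hρχ, η⁻¹ * ρ, ?_, mul_inv_cancel_left η ρ⟩
    intro y hy
    simp [hρP y hy]
  exact ⟨⟨fun ha => hcb (hac ha), fun hb => hca (hbc hb)⟩, hac, hca⟩
end
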